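/- arXiv:2512.04807 — 6 statements merged into one kernel-verified Lean document; each statement's English description precedes it below -/
import Mathlib

section
/- Let V be a finite set and let (w_n) be a sequence of edge conductances on V (symmetric functions w_n : V × V → [0,∞) vanishing on the diagonal) such that each network (V, w_n) is connected, and let R_n : V × V → [0,∞) be the associated effective resistance metrics. Suppose that R_n converges pointwise to a function R : V × V → [0,∞) with R(x,y) > 0 for all x ≠ y. Then there exists an edge conductance function w : V × V → [0,∞) such that w_n converges pointwise to w and R is the effective resistance associated with (V, w). -/
open scoped Classical

open Filter Matrix

/-- An edge conductance function on a set `V`: nonnegative, symmetric, vanishing on the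
diagonal. -/
def IsConductance {V : Type*} (w : V → V → ℝ) : Prop :=
  (∀ x y, 0 ≤ w x y) ∧ (∀ x y, w x y = w y x) ∧ (∀ x, w x x = 0)

/-- The energy of a function `f : V → ℝ` with respect to edge conductances `w`. -/
noncomputable def energy {V : Type*} [Fintype V] (w : V → V → ℝ) (f : V → ℝ) : ℝ :=
  (1 / 2) * ∑ x, ∑ y, w x y * (f x - f y) ^ 2

/-- The network `(V, w)` is connected: any two vertices are joined by a chain of edges with
positive conductance. -/
def NetworkConnected {V : Type*} (w : V → V → ℝ) : Prop :=
  ∀ x y : V, Relation.ReflTransGen (fun a b => 0 < w a b) x y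

/-- The effective resistance associated with the network `(V, w)`. -/
noncomputable def effRes {V : Type*} [Fintype V] (w : V → V → ℝ) (x y : V) : ℝ :=
  if x = y then 0
  else (sInf {e : ℝ | ∃ f : V → ℝ, f x = 1 ∧ f y = 0 ∧ energy w f = e})⁻¹

section Aux

variable {V : Type*} [Fintype V] [DecidableEq V]

/-- split a sum over `V` at the base point `o`. -/
lemma ERaux_sum_split (o : V) (F : V → ℝ) :
    ∑ x, F x = F o + ∑ a : {x : V // x ≠ o}, F a := by
  classical
  rw [← Finset.sum_filter_add_sum_filter_not Finset.univ (fun x => x = o)]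
  congr 1
  · rw [Finset.filter_eq', if_pos (Finset.mem_univ o), Finset.sum_singleton]
  · exact Finset.sum_subtype (p := fun x => x ≠ o) (Finset.univ.filter fun x => ¬ x = o) (fun x => by simp) F

/-- the grounded Laplacian -/
noncomputable def Lmat (w : V → V → ℝ) (o : V) :
    Matrix {x : V // x ≠ o} {x : V // x ≠ o} ℝ :=
  fun a b => if a = b then (∑ y, w a y) else - w (a : V) (b : V)

lemma ERaux_energy_eq (w : V → V → ℝ) (hs : ∀ x y, w x y = w y x) (f : V → ℝ) :
    energy w f = (∑ x, (∑ y, w x y) * f x ^ 2) - ∑ x, ∑ y, w x y * (f x * f y) := by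
  have key : ∑ x, ∑ y, w x y * (f x - f y) ^ 2
      = 2 * ((∑ x, (∑ y, w x y) * f x ^ 2) - ∑ x, ∑ y, w x y * (f x * f y)) := by
    have h2 : ∑ x, ∑ y, w x y * f y ^ 2 = ∑ x, ∑ y, w x y * f x ^ 2 := by
      rw [Finset.sum_comm]
      exact Finset.sum_congr rfl fun x _ => Finset.sum_congr rfl fun y _ => by rw [hs]
    calc ∑ x, ∑ y, w x y * (f x - f y) ^ 2
        = ∑ x, ∑ y, (w x y * f x ^ 2 + w x y * f y ^ 2 - 2 * (w x y * (f x * f y))) := by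
          exact Finset.sum_congr rfl fun x _ => Finset.sum_congr rfl fun y _ => by ring
      _ = (∑ x, ∑ y, w x y * f x ^ 2) + (∑ x, ∑ y, w x y * f y ^ 2)
            - 2 * (∑ x, ∑ y, w x y * (f x * f y)) := by
          simp [Finset.sum_add_distrib, Finset.sum_sub_distrib, Finset.mul_sum]
      _ = _ := by
          rw [h2]
          simp only [Finset.sum_mul]
          ring
  rw [energy, key]; ring

lemma ERaux_quadform_eq (w : V → V → ℝ) (hdiag : ∀ x, w x x = 0) (o : V)
    (g : {x : V // x ≠ o} → ℝ) :
    g ⬝ᵥ (Lmat w o *ᵥ g)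
      = (∑ a : {x : V // x ≠ o}, (∑ y, w a y) * g a ^ 2)
        - ∑ a : {x : V // x ≠ o}, ∑ b : {x : V // x ≠ o}, w a b * (g a * g b) := by
  classical
  have hL : ∀ a b : {x : V // x ≠ o},
      Lmat w o a b = (if a = b then (∑ y, w (a : V) y) else 0) - w (a : V) (b : V) := by
    intro a b
    by_cases h : a = b
    · subst h; simp [Lmat, hdiag]
    · simp [Lmat, h]
  simp only [dotProduct, Matrix.mulVec, hL]
  have key : ∀ a : {x : V // x ≠ o},
      g a * (∑ b : {x : V // x ≠ o},
        ((if a = b then (∑ y, w (a : V) y) else 0) - w (a : V) (b : V)) * g b)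
      = (∑ y, w (a : V) y) * g a ^ 2
        - ∑ b : {x : V // x ≠ o}, w (a : V) (b : V) * (g a * g b) := by
    intro a
    rw [Finset.mul_sum]
    calc ∑ b : {x : V // x ≠ o},
          g a * (((if a = b then (∑ y, w (a : V) y) else 0) - w (a : V) (b : V)) * g b)
        = ∑ b : {x : V // x ≠ o},
            ((if a = b then (∑ y, w (a : V) y) * (g a * g b) else 0)
              - w (a : V) (b : V) * (g a * g b)) := by
          refine Finset.sum_congr rfl fun b _ => ?_
          by_cases h : a = b
          · subst h; simp; ring
          · simp [h]; ring
      _ = (∑ b : {x : V // x ≠ o}, (if a = b then (∑ y, w (a : V) y) * (g a * g b) else 0))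
            - ∑ b : {x : V // x ≠ o}, w (a : V) (b : V) * (g a * g b) :=
          Finset.sum_sub_distrib _ _
      _ = (∑ y, w (a : V) y) * g a ^ 2
            - ∑ b : {x : V // x ≠ o}, w (a : V) (b : V) * (g a * g b) := by
          rw [Finset.sum_ite_eq]
          simp only [Finset.mem_univ, if_pos]
          congr 1
          ring
  rw [Finset.sum_congr rfl fun a _ => key a, Finset.sum_sub_distrib]

end Aux

section Aux2

variable {V : Type*} [Fintype V] [DecidableEq V]

/-- extension of a function on `V \ {o}` by zero at `o` -/
noncomputable def extZ (o : V) (g : {x : V // x ≠ o} → ℝ) : V → ℝ :=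
  fun x => if h : x = o then 0 else g ⟨x, h⟩

lemma extZ_o (o : V) (g : {x : V // x ≠ o} → ℝ) : extZ o g o = 0 := dif_pos rfl

lemma extZ_coe (o : V) (g : {x : V // x ≠ o} → ℝ) (a : {x : V // x ≠ o}) :
    extZ o g a = g a := by
  simp only [extZ, dif_neg a.prop]

lemma ERaux_energy_quadform (w : V → V → ℝ) (hs : ∀ x y, w x y = w y x)
    (hdiag : ∀ x, w x x = 0) (o : V) (f : V → ℝ) (hfo : f o = 0) :
    energy w f = (fun a : {x : V // x ≠ o} => f a) ⬝ᵥ (Lmat w o *ᵥ fun a => f a) := by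
  rw [ERaux_energy_eq w hs f, ERaux_quadform_eq w hdiag o]
  have inner : ∀ a : {x : V // x ≠ o},
      (∑ y, w (a : V) y * (f a * f y))
        = ∑ b : {x : V // x ≠ o}, w (a : V) (b : V) * (f a * f b) := by
    intro a
    rw [ERaux_sum_split o (fun y => w (a : V) y * (f (a : V) * f y))]
    simp [hfo]
  congr 1
  · rw [ERaux_sum_split o (fun x => (∑ y, w x y) * f x ^ 2)]
    simp [hfo]
  · rw [ERaux_sum_split o (fun x => ∑ y, w x y * (f x * f y))]
    have h0 : (∑ y, w o y * (f o * f y)) = 0 := by simp [hfo]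
    rw [h0, zero_add]
    exact Finset.sum_congr rfl fun a _ => inner a

lemma ERaux_quadform_nonneg (w : V → V → ℝ) (hw : IsConductance w) (o : V)
    (g : {x : V // x ≠ o} → ℝ) : 0 ≤ g ⬝ᵥ (Lmat w o *ᵥ g) := by
  have h := ERaux_energy_quadform w hw.2.1 hw.2.2 o (extZ o g) (extZ_o o g)
  rw [show (fun a : {x : V // x ≠ o} => extZ o g a) = g from funext (extZ_coe o g)] at h
  rw [← h]
  apply mul_nonneg (by norm_num)
  exact Finset.sum_nonneg fun x _ => Finset.sum_nonneg fun y _ =>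
    mul_nonneg (hw.1 x y) (sq_nonneg _)

lemma ERaux_energy_zero (w : V → V → ℝ) (hw : IsConductance w) (f : V → ℝ)
    (h : energy w f = 0)
    {x y : V} (hxy : Relation.ReflTransGen (fun a b => 0 < w a b) x y) : f x = f y := by
  have hsum : ∑ x, ∑ y, w x y * (f x - f y) ^ 2 = 0 := by
    unfold energy at h; linarith
  have hterm : ∀ x y, w x y * (f x - f y) ^ 2 = 0 := by
    intro x y
    have h1 := (Finset.sum_eq_zero_iff_of_nonneg (fun x _ => Finset.sum_nonneg fun y _ =>
      mul_nonneg (hw.1 x y) (sq_nonneg _))).1 hsum x (Finset.mem_univ x)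
    exact (Finset.sum_eq_zero_iff_of_nonneg (fun y _ =>
      mul_nonneg (hw.1 x y) (sq_nonneg _))).1 h1 y (Finset.mem_univ y)
  induction hxy with
  | refl => rfl
  | @tail b c _ hstep ih =>
      refine ih.trans ?_
      have hbc := hterm b c
      have h2 : (f b - f c) ^ 2 = 0 := by
        rcases mul_eq_zero.1 hbc with h' | h'
        · exact absurd h' (ne_of_gt hstep)
        · exact h'
      have h3 : f b - f c = 0 := by
        have := sq_eq_zero_iff.1 h2
        exact this
      linarith

lemma ERaux_det_ne_zero (w : V → V → ℝ) (hw : IsConductance w)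
    (hc : NetworkConnected w) (o : V) : (Lmat w o).det ≠ 0 := by
  intro hdet
  obtain ⟨g, hg, hmul⟩ := (Matrix.exists_mulVec_eq_zero_iff).2 hdet
  have hq : g ⬝ᵥ (Lmat w o *ᵥ g) = 0 := by rw [hmul]; simp
  have he : energy w (extZ o g) = 0 := by
    rw [ERaux_energy_quadform w hw.2.1 hw.2.2 o (extZ o g) (extZ_o o g),
      show (fun a : {x : V // x ≠ o} => extZ o g a) = g from funext (extZ_coe o g)]
    exact hq
  apply hg
  funext a
  have h1 : extZ o g (a : V) = extZ o g o := ERaux_energy_zero w hw _ he (hc a o)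
  rw [extZ_o, extZ_coe] at h1
  exact h1

end Aux2

section Aux3

variable {ι : Type*} [Fintype ι]

lemma ERaux_dot_symm {A : Matrix ι ι ℝ} (hsym : Aᵀ = A) (a b : ι → ℝ) :
    a ⬝ᵥ (A *ᵥ b) = b ⬝ᵥ (A *ᵥ a) := by
  rw [Matrix.dotProduct_mulVec, ← Matrix.mulVec_transpose, hsym, dotProduct_comm]

lemma ERaux_psd_kernel {A : Matrix ι ι ℝ} (hsym : Aᵀ = A)
    (hpsd : ∀ g, 0 ≤ g ⬝ᵥ (A *ᵥ g)) {u : ι → ℝ} (hu : u ⬝ᵥ (A *ᵥ u) = 0) :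
    A *ᵥ u = 0 := by
  have key : ∀ h : ι → ℝ, h ⬝ᵥ (A *ᵥ u) = 0 := by
    intro h
    set s := h ⬝ᵥ (A *ᵥ u) with hs
    set q := h ⬝ᵥ (A *ᵥ h) with hqdef
    have expand : ∀ t : ℝ, (u + t • h) ⬝ᵥ (A *ᵥ (u + t • h)) = 2 * t * s + t ^ 2 * q := by
      intro t
      rw [Matrix.mulVec_add, Matrix.mulVec_smul, dotProduct_add,
        add_dotProduct, add_dotProduct, dotProduct_smul,
        smul_dotProduct, smul_dotProduct, dotProduct_smul, hu,
        ERaux_dot_symm hsym u h]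
      simp only [smul_eq_mul]
      ring
    have hq0 : 0 ≤ q := hpsd h
    by_contra hs0
    have hq1 : (0:ℝ) < q + 1 := by linarith
    have h1 := hpsd (u + (-s / (q + 1)) • h)
    rw [expand] at h1
    have hs2 : 0 < s ^ 2 := lt_of_le_of_ne (sq_nonneg s) (Ne.symm (pow_ne_zero 2 hs0))
    have heq : 2 * (-s / (q + 1)) * s + (-s / (q + 1)) ^ 2 * q
        = -(s ^ 2 * (q + 2)) / (q + 1) ^ 2 := by
      field_simp
      ring
    rw [heq] at h1
    have hneg : -(s ^ 2 * (q + 2)) / (q + 1) ^ 2 < 0 :=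
      div_neg_of_neg_of_pos (by nlinarith) (by positivity)
    linarith
  exact (dotProduct_self_eq_zero).1 (key (A *ᵥ u))

lemma ERaux_min [DecidableEq ι] {A : Matrix ι ι ℝ} (hsym : Aᵀ = A)
    (hpsd : ∀ g, 0 ≤ g ⬝ᵥ (A *ᵥ g)) (hdet : A.det ≠ 0) (v : ι → ℝ) (hv : v ≠ 0) :
    0 < v ⬝ᵥ (A⁻¹ *ᵥ v) ∧
    (∀ g : ι → ℝ, v ⬝ᵥ g = 1 → 1 / (v ⬝ᵥ (A⁻¹ *ᵥ v)) ≤ g ⬝ᵥ (A *ᵥ g)) ∧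
    (∃ g : ι → ℝ, v ⬝ᵥ g = 1 ∧ g ⬝ᵥ (A *ᵥ g) = 1 / (v ⬝ᵥ (A⁻¹ *ᵥ v))) := by
  have hunit : IsUnit A.det := isUnit_iff_ne_zero.2 hdet
  set u := A⁻¹ *ᵥ v with hu
  have hAu : A *ᵥ u = v := by
    rw [hu, Matrix.mulVec_mulVec, Matrix.mul_nonsing_inv A hunit, Matrix.one_mulVec]
  set m := v ⬝ᵥ u with hm
  have hm_eq : m = u ⬝ᵥ (A *ᵥ u) := by rw [hAu, dotProduct_comm]
  have hm_nonneg : 0 ≤ m := hm_eq ▸ hpsd u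
  have hm_pos : 0 < m := by
    rcases hm_nonneg.lt_or_eq with h | h
    · exact h
    · exfalso
      have h0 : A *ᵥ u = 0 := ERaux_psd_kernel hsym hpsd (by rw [← hm_eq, ← h])
      rw [hAu] at h0; exact hv h0
  have hvone : v ⬝ᵥ (m⁻¹ • u) = 1 := by
    rw [dotProduct_smul, smul_eq_mul, ← hm, inv_mul_cancel₀ hm_pos.ne']
  refine ⟨hm_pos, ?_, ⟨m⁻¹ • u, hvone, ?_⟩⟩
  · intro g hg
    set h := g - m⁻¹ • u with hh
    have hgdecomp : g = m⁻¹ • u + h := by rw [hh]; abel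
    have hvh : v ⬝ᵥ h = 0 := by
      rw [hh, dotProduct_sub, hg, hvone, sub_self]
    have hhAu : h ⬝ᵥ (A *ᵥ u) = 0 := by
      rw [hAu, dotProduct_comm]; exact hvh
    have huAh : u ⬝ᵥ (A *ᵥ h) = 0 := by rw [ERaux_dot_symm hsym]; exact hhAu
    have hexp : g ⬝ᵥ (A *ᵥ g) = m⁻¹ * m⁻¹ * m + h ⬝ᵥ (A *ᵥ h) := by
      rw [hgdecomp, Matrix.mulVec_add, Matrix.mulVec_smul, dotProduct_add,
        add_dotProduct, add_dotProduct, smul_dotProduct,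
        dotProduct_smul, smul_dotProduct, dotProduct_smul,
        ← hm_eq, hhAu, huAh]
      simp only [smul_eq_mul]
      ring
    rw [hexp]
    have : 1 / m = m⁻¹ * m⁻¹ * m := by field_simp
    rw [← this] at *
    exact le_add_of_nonneg_right (hpsd h)
  · rw [Matrix.mulVec_smul, smul_dotProduct, dotProduct_smul, ← hm_eq]
    simp only [smul_eq_mul]
    field_simp

end Aux3

section Aux4

variable {V : Type*} [Fintype V] [DecidableEq V]

/-- indicator difference vector -/
noncomputable def vvec (o x y : V) : {z : V // z ≠ o} → ℝ :=
  fun a => (if (a : V) = x then 1 else 0) - (if (a : V) = y then 1 else 0)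

lemma ERaux_ind_dot (o z : V) (p : {x : V // x ≠ o} → ℝ) :
    (∑ a : {x : V // x ≠ o}, (if (a : V) = z then 1 else 0) * p a) = extZ o p z := by
  by_cases hz : z = o
  · subst hz
    rw [extZ_o]
    refine Finset.sum_eq_zero fun a _ => ?_
    rw [if_neg a.prop, zero_mul]
  · rw [show extZ o p z = p ⟨z, hz⟩ from extZ_coe o p ⟨z, hz⟩]
    calc ∑ a : {x : V // x ≠ o}, (if (a : V) = z then (1:ℝ) else 0) * p a
        = ∑ a : {x : V // x ≠ o}, (if a = ⟨z, hz⟩ then p a else 0) := by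
          refine Finset.sum_congr rfl fun a _ => ?_
          by_cases h : a = (⟨z, hz⟩ : {x : V // x ≠ o})
          · subst h; simp
          · rw [if_neg h, if_neg (fun hc => h (Subtype.ext hc)), zero_mul]
      _ = p ⟨z, hz⟩ := by rw [Finset.sum_ite_eq' Finset.univ]; simp

lemma ERaux_vvec_dot (o x y : V) (p : {z : V // z ≠ o} → ℝ) :
    vvec o x y ⬝ᵥ p = extZ o p x - extZ o p y := by
  simp only [dotProduct, vvec, sub_mul, Finset.sum_sub_distrib, ERaux_ind_dot]

lemma ERaux_energy_shift (w : V → V → ℝ) (f : V → ℝ) (c : ℝ) :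
    energy w (fun z => f z - c) = energy w f := by
  unfold energy
  congr 1
  exact Finset.sum_congr rfl fun a _ => Finset.sum_congr rfl fun b _ => by ring

lemma extZ_restrict (o : V) (f : V → ℝ) (hf : f o = 0) :
    extZ o (fun a : {x : V // x ≠ o} => f a) = f := by
  funext z
  by_cases hz : z = o
  · subst hz; rw [extZ_o, hf]
  · exact extZ_coe o _ ⟨z, hz⟩

lemma ERaux_vvec_ne_zero (o x y : V) (hxy : x ≠ y) : vvec o x y ≠ 0 := by
  intro h
  by_cases hx : x = o
  · have hy : y ≠ o := fun hy => hxy (hx.trans hy.symm)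
    have h1 := congrFun h ⟨y, hy⟩
    have hyx : y ≠ x := fun h' => hxy h'.symm
    simp [vvec, hyx] at h1
  · have h1 := congrFun h ⟨x, hx⟩
    simp [vvec, hxy] at h1

lemma ERaux_Lmat_symm (w : V → V → ℝ) (hs : ∀ x y, w x y = w y x) (o : V) :
    (Lmat w o)ᵀ = Lmat w o := by
  ext a b
  rw [Matrix.transpose_apply]
  by_cases h : a = b
  · subst h; rfl
  · show Lmat w o b a = Lmat w o a b
    unfold Lmat
    rw [if_neg (Ne.symm h), if_neg h, hs]

lemma ERaux_effRes_eq (w : V → V → ℝ) (hw : IsConductance w) (o : V)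
    (hdet : (Lmat w o).det ≠ 0) (x y : V) (hxy : x ≠ y) :
    effRes w x y = vvec o x y ⬝ᵥ ((Lmat w o)⁻¹ *ᵥ vvec o x y) := by
  obtain ⟨hm_pos, hlb, g0, hg0v, hg0E⟩ := ERaux_min (ERaux_Lmat_symm w hw.2.1 o)
    (ERaux_quadform_nonneg w hw o) hdet (vvec o x y) (ERaux_vvec_ne_zero o x y hxy)
  set m := vvec o x y ⬝ᵥ ((Lmat w o)⁻¹ *ᵥ vvec o x y) with hm
  have hlow : ∀ e ∈ {e : ℝ | ∃ f : V → ℝ, f x = 1 ∧ f y = 0 ∧ energy w f = e}, 1 / m ≤ e := by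
    rintro e ⟨f, hfx, hfy, rfl⟩
    set f' := fun z => f z - f o with hf'
    have hf'o : f' o = 0 := sub_self _
    have hE : energy w f = (fun a : {z : V // z ≠ o} => f' a) ⬝ᵥ
        (Lmat w o *ᵥ fun a : {z : V // z ≠ o} => f' a) := by
      rw [← ERaux_energy_shift w f (f o)]
      exact ERaux_energy_quadform w hw.2.1 hw.2.2 o f' hf'o
    have hcon : vvec o x y ⬝ᵥ (fun a : {z : V // z ≠ o} => f' a) = 1 := by
      rw [ERaux_vvec_dot, extZ_restrict o f' hf'o]
      simp only [hf']
      rw [hfx, hfy]; ring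
    rw [hE]
    exact hlb _ hcon
  have hmem : 1 / m ∈ {e : ℝ | ∃ f : V → ℝ, f x = 1 ∧ f y = 0 ∧ energy w f = e} := by
    refine ⟨fun z => extZ o g0 z - extZ o g0 y, ?_, sub_self _, ?_⟩
    · have := ERaux_vvec_dot o x y g0
      rw [hg0v] at this
      show extZ o g0 x - extZ o g0 y = 1
      linarith
    · rw [ERaux_energy_shift w (extZ o g0) (extZ o g0 y),
        ERaux_energy_quadform w hw.2.1 hw.2.2 o (extZ o g0) (extZ_o o g0),
        show (fun a : {z : V // z ≠ o} => extZ o g0 a) = g0 from funext (extZ_coe o g0)]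
      exact hg0E
  have hsInf : sInf {e : ℝ | ∃ f : V → ℝ, f x = 1 ∧ f y = 0 ∧ energy w f = e} = 1 / m :=
    le_antisymm (csInf_le ⟨1 / m, hlow⟩ hmem) (le_csInf ⟨1 / m, hmem⟩ hlow)
  rw [effRes, if_neg hxy, hsInf, one_div, inv_inv]

lemma ERaux_w_le_energy (w : V → V → ℝ) (hw : IsConductance w) (x y : V) (hxy : x ≠ y)
    (f : V → ℝ) (hfx : f x = 1) (hfy : f y = 0) : w x y ≤ energy w f := by
  have hterm : ∀ a b, 0 ≤ w a b * (f a - f b) ^ 2 := fun a b =>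
    mul_nonneg (hw.1 a b) (sq_nonneg _)
  have hrow : ∀ a b : V, w a b * (f a - f b) ^ 2 ≤ ∑ c, w a c * (f a - f c) ^ 2 := fun a b =>
    Finset.single_le_sum (fun c _ => hterm a c) (Finset.mem_univ b)
  have hsum : (∑ c, w x c * (f x - f c) ^ 2) + (∑ c, w y c * (f y - f c) ^ 2)
      ≤ ∑ a, ∑ c, w a c * (f a - f c) ^ 2 := by
    calc (∑ c, w x c * (f x - f c) ^ 2) + (∑ c, w y c * (f y - f c) ^ 2)
        = ∑ a ∈ ({x, y} : Finset V), ∑ c, w a c * (f a - f c) ^ 2 :=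
          (Finset.sum_pair (f := fun a => ∑ c, w a c * (f a - f c) ^ 2) hxy).symm
      _ ≤ ∑ a, ∑ c, w a c * (f a - f c) ^ 2 := by
          refine Finset.sum_le_sum_of_subset_of_nonneg (Finset.subset_univ _) ?_
          intro a _ _
          exact Finset.sum_nonneg fun c _ => hterm a c
  have h1 : w x y * (f x - f y) ^ 2 = w x y := by rw [hfx, hfy]; ring
  have h2 : w y x * (f y - f x) ^ 2 = w x y := by rw [hfx, hfy, hw.2.1 y x]; ring
  unfold energy
  linarith [hrow x y, hrow y x, hsum]

lemma ERaux_effRes_symm (w : V → V → ℝ) (x y : V) : effRes w x y = effRes w y x := by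
  by_cases h : x = y
  · subst h; rfl
  · have hsets : {e : ℝ | ∃ f : V → ℝ, f x = 1 ∧ f y = 0 ∧ energy w f = e}
        = {e : ℝ | ∃ f : V → ℝ, f y = 1 ∧ f x = 0 ∧ energy w f = e} := by
      have he : ∀ f : V → ℝ, energy w (fun z => 1 - f z) = energy w f := by
        intro f
        unfold energy
        congr 1
        exact Finset.sum_congr rfl fun a _ => Finset.sum_congr rfl fun b _ => by ring
      ext e
      constructor <;> rintro ⟨f, h1, h2, rfl⟩
      · exact ⟨fun z => 1 - f z, by simp [h2], by simp [h1], he f⟩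
      · exact ⟨fun z => 1 - f z, by simp [h2], by simp [h1], he f⟩
    rw [effRes, effRes, if_neg h, if_neg (Ne.symm h), hsets]

end Aux4

section Aux5

variable {V : Type*} [Fintype V] [DecidableEq V]

lemma ERaux_mulVec_vvec (o : V) (K : Matrix {z : V // z ≠ o} {z : V // z ≠ o} ℝ) (x y : V) :
    K *ᵥ vvec o x y = fun a => extZ o (K a) x - extZ o (K a) y := by
  funext a
  show ∑ b, K a b * vvec o x y b = _
  have h1 : ∑ b, K a b * vvec o x y b = vvec o x y ⬝ᵥ (fun b => K a b) := by
    simp only [dotProduct]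
    exact Finset.sum_congr rfl fun b _ => by ring
  rw [h1, ERaux_vvec_dot]

lemma ERaux_quad_gen (o : V) (K : Matrix {z : V // z ≠ o} {z : V // z ≠ o} ℝ) (x y : V) :
    vvec o x y ⬝ᵥ (K *ᵥ vvec o x y)
      = extZ o (fun a => extZ o (K a) x - extZ o (K a) y) x
        - extZ o (fun a => extZ o (K a) x - extZ o (K a) y) y := by
  rw [ERaux_mulVec_vvec, ← ERaux_vvec_dot]

lemma ERaux_quad_ao (o : V) (K : Matrix {z : V // z ≠ o} {z : V // z ≠ o} ℝ)
    (a : {z : V // z ≠ o}) :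
    vvec o (a : V) o ⬝ᵥ (K *ᵥ vvec o (a : V) o) = K a a := by
  rw [ERaux_quad_gen]
  simp only [extZ_coe, extZ_o]
  ring

lemma ERaux_quad_ob (o : V) (K : Matrix {z : V // z ≠ o} {z : V // z ≠ o} ℝ)
    (b : {z : V // z ≠ o}) :
    vvec o o (b : V) ⬝ᵥ (K *ᵥ vvec o o (b : V)) = K b b := by
  rw [ERaux_quad_gen]
  simp only [extZ_coe, extZ_o]
  ring

lemma ERaux_quad_ab (o : V) (K : Matrix {z : V // z ≠ o} {z : V // z ≠ o} ℝ)
    (a b : {z : V // z ≠ o}) :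
    vvec o (a : V) (b : V) ⬝ᵥ (K *ᵥ vvec o (a : V) (b : V))
      = K a a + K b b - K a b - K b a := by
  rw [ERaux_quad_gen]
  simp only [extZ_coe, extZ_o]
  ring

lemma ERaux_row_sum (w : V → V → ℝ) (hdiag : ∀ x, w x x = 0) (o : V)
    (a : {z : V // z ≠ o}) :
    ∑ b : {z : V // z ≠ o}, Lmat w o a b = w (a : V) o := by
  have hL : ∀ b : {x : V // x ≠ o},
      Lmat w o a b = (if a = b then (∑ y, w (a : V) y) else 0) - w (a : V) (b : V) := by
    intro b
    by_cases h : a = b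
    · subst h; simp [Lmat, hdiag]
    · simp [Lmat, h]
  rw [Finset.sum_congr rfl fun b _ => hL b, Finset.sum_sub_distrib, Finset.sum_ite_eq]
  simp only [Finset.mem_univ, if_pos]
  rw [ERaux_sum_split o (fun y => w (a : V) y)]
  ring

lemma ERaux_w_le_inv (w : V → V → ℝ) (hw : IsConductance w) (o : V)
    (hdet : (Lmat w o).det ≠ 0) (x y : V) (hxy : x ≠ y) :
    w x y ≤ (effRes w x y)⁻¹ := by
  obtain ⟨hm_pos, hlb, g0, hg0v, hg0E⟩ := ERaux_min (ERaux_Lmat_symm w hw.2.1 o)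
    (ERaux_quadform_nonneg w hw o) hdet (vvec o x y) (ERaux_vvec_ne_zero o x y hxy)
  set m := vvec o x y ⬝ᵥ ((Lmat w o)⁻¹ *ᵥ vvec o x y) with hm
  set f0 : V → ℝ := fun z => extZ o g0 z - extZ o g0 y with hf0
  have hf0x : f0 x = 1 := by
    have := ERaux_vvec_dot o x y g0
    rw [hg0v] at this
    show extZ o g0 x - extZ o g0 y = 1
    linarith
  have hf0y : f0 y = 0 := sub_self _
  have hE : energy w f0 = 1 / m := by
    rw [hf0, ERaux_energy_shift w (extZ o g0) (extZ o g0 y),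
      ERaux_energy_quadform w hw.2.1 hw.2.2 o (extZ o g0) (extZ_o o g0),
      show (fun a : {z : V // z ≠ o} => extZ o g0 a) = g0 from funext (extZ_coe o g0)]
    exact hg0E
  have hle := ERaux_w_le_energy w hw x y hxy f0 hf0x hf0y
  rw [hE] at hle
  rw [ERaux_effRes_eq w hw o hdet x y hxy, ← hm, ← one_div]
  exact hle

lemma ERaux_effRes_pos (w : V → V → ℝ) (hw : IsConductance w) (o : V)
    (hdet : (Lmat w o).det ≠ 0) (x y : V) (hxy : x ≠ y) :
    0 < effRes w x y := by
  rw [ERaux_effRes_eq w hw o hdet x y hxy]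
  exact (ERaux_min (ERaux_Lmat_symm w hw.2.1 o) (ERaux_quadform_nonneg w hw o) hdet
    (vvec o x y) (ERaux_vvec_ne_zero o x y hxy)).1

end Aux5

/-- If the effective resistances of a sequence of connected networks on a finite vertex set `V`
converge pointwise to a function `R` which is positive off the diagonal, then the conductances
converge pointwise to some conductance function `w`, and `R` is the effective resistance
associated with `(V, w)`. -/
theorem effRes_limit {V : Type*} [Fintype V] (w : ℕ → V → V → ℝ) (R : V → V → ℝ)
    (hcond : ∀ n, IsConductance (w n))
    (hconn : ∀ n, NetworkConnected (w n))
    (hRnonneg : ∀ x y, 0 ≤ R x y)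
    (hlim : ∀ x y, Tendsto (fun n => effRes (w n) x y) atTop (nhds (R x y)))
    (hpos : ∀ x y, x ≠ y → 0 < R x y) :
    ∃ wlim : V → V → ℝ, IsConductance wlim ∧
      (∀ x y, Tendsto (fun n => w n x y) atTop (nhds (wlim x y))) ∧
      (∀ x y, R x y = effRes wlim x y) := by
  classical
  have hRdiag : ∀ x, R x x = 0 := by
    intro x
    refine tendsto_nhds_unique (hlim x x) ?_
    have h0 : (fun n => effRes (w n) x x) = fun _ => (0:ℝ) := funext fun n => by simp [effRes]
    rw [h0]; exact tendsto_const_nhds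
  rcases subsingleton_or_nontrivial V with hV | hV
  · refine ⟨fun _ _ => 0, ⟨fun _ _ => le_refl 0, fun _ _ => rfl, fun _ => rfl⟩, ?_, ?_⟩
    · intro x y
      have hxy : x = y := Subsingleton.elim x y
      subst hxy
      have h0 : (fun n => w n x x) = fun _ => (0:ℝ) := funext fun n => (hcond n).2.2 x
      rw [h0]; exact tendsto_const_nhds
    · intro x y
      have hxy : x = y := Subsingleton.elim x y
      subst hxy
      simp [effRes, hRdiag x]
  · obtain ⟨o⟩ := (inferInstance : Nonempty V)
    set A : ℕ → Matrix {z : V // z ≠ o} {z : V // z ≠ o} ℝ := fun n => Lmat (w n) o with hAdef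
    have hdetn : ∀ n, (A n).det ≠ 0 := fun n => ERaux_det_ne_zero (w n) (hcond n) (hconn n) o
    have hRsymm : ∀ x y, R x y = R y x := by
      intro x y
      refine tendsto_nhds_unique (hlim x y) ?_
      have h0 : (fun n => effRes (w n) y x) = fun n => effRes (w n) x y :=
        funext fun n => ERaux_effRes_symm (w n) y x
      rw [← h0]; exact hlim y x
    set M : ℕ → Matrix {z : V // z ≠ o} {z : V // z ≠ o} ℝ :=
      fun n a b =>
        (effRes (w n) (a : V) o + effRes (w n) (b : V) o - effRes (w n) (a : V) (b : V)) / 2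
      with hMdef
    have hMK : ∀ n, M n = (A n)⁻¹ := by
      intro n
      have hsymA : (A n)ᵀ = A n := ERaux_Lmat_symm (w n) (hcond n).2.1 o
      have hKsym : ((A n)⁻¹)ᵀ = (A n)⁻¹ := by
        rw [Matrix.transpose_nonsing_inv, hsymA]
      ext a b
      have hao : effRes (w n) (a : V) o = ((A n)⁻¹) a a := by
        rw [ERaux_effRes_eq (w n) (hcond n) o (hdetn n) (a : V) o a.prop, ERaux_quad_ao]
      have hbo : effRes (w n) (b : V) o = ((A n)⁻¹) b b := by
        rw [ERaux_effRes_eq (w n) (hcond n) o (hdetn n) (b : V) o b.prop, ERaux_quad_ao]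
      by_cases hab : a = b
      · subst hab
        show (effRes (w n) (a : V) o + effRes (w n) (a : V) o
            - effRes (w n) (a : V) (a : V)) / 2 = ((A n)⁻¹) a a
        rw [hao, show effRes (w n) (a : V) (a : V) = 0 from by simp [effRes]]
        ring
      · have hab' : (a : V) ≠ (b : V) := fun h => hab (Subtype.ext h)
        have hKba : ((A n)⁻¹) b a = ((A n)⁻¹) a b := by
          rw [show ((A n)⁻¹) b a = (((A n)⁻¹)ᵀ) a b from (Matrix.transpose_apply _ a b).symm,
            hKsym]
        have hab2 : effRes (w n) (a : V) (b : V)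
            = ((A n)⁻¹) a a + ((A n)⁻¹) b b - ((A n)⁻¹) a b - ((A n)⁻¹) b a := by
          rw [ERaux_effRes_eq (w n) (hcond n) o (hdetn n) (a : V) (b : V) hab', ERaux_quad_ab]
        show (effRes (w n) (a : V) o + effRes (w n) (b : V) o
            - effRes (w n) (a : V) (b : V)) / 2 = ((A n)⁻¹) a b
        rw [hao, hbo, hab2, hKba]
        ring
    set Mlim : Matrix {z : V // z ≠ o} {z : V // z ≠ o} ℝ :=
      fun a b => (R (a : V) o + R (b : V) o - R (a : V) (b : V)) / 2 with hMlimdef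
    have hMt : ∀ a b, Tendsto (fun n => M n a b) atTop (nhds (Mlim a b)) := by
      intro a b
      exact (((hlim (a : V) o).add (hlim (b : V) o)).sub (hlim (a : V) (b : V))).div_const 2
    have hMtend : Tendsto M atTop (nhds Mlim) :=
      tendsto_pi_nhds.2 fun a => tendsto_pi_nhds.2 fun b => hMt a b
    -- uniform bounds on conductances
    have hwle : ∀ x y : V, ∃ C : ℝ, ∀ n, |w n x y| ≤ C := by
      intro x y
      by_cases hxy : x = y
      · exact ⟨0, fun n => by simp [hxy, (hcond n).2.2 y]⟩
      · have htend : Tendsto (fun n => (effRes (w n) x y)⁻¹) atTop (nhds (R x y)⁻¹) :=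
          (hlim x y).inv₀ (hpos x y hxy).ne'
        obtain ⟨C, hC⟩ := htend.bddAbove_range
        refine ⟨C, fun n => ?_⟩
        rw [abs_of_nonneg ((hcond n).1 x y)]
        exact le_trans (ERaux_w_le_inv (w n) (hcond n) o (hdetn n) x y hxy) (hC ⟨n, rfl⟩)
    choose Cw hCw using hwle
    have hApp : ∀ n (a b : {z : V // z ≠ o}),
        A n a b = if a = b then (∑ y, w n (a : V) y) else -(w n (a : V) (b : V)) :=
      fun n a b => rfl
    set B : {z : V // z ≠ o} → {z : V // z ≠ o} → ℝ :=
      fun a b => if a = b then ∑ y, Cw (a : V) y else Cw (a : V) (b : V) with hBdef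
    have hB : ∀ n (a b : {z : V // z ≠ o}), |A n a b| ≤ B a b := by
      intro n a b
      by_cases hab : a = b
      · subst hab
        rw [hApp, if_pos rfl, hBdef]
        simp only [if_pos rfl]
        refine le_trans (Finset.abs_sum_le_sum_abs _ _) ?_
        exact Finset.sum_le_sum fun y _ => hCw (a : V) y n
      · rw [hApp, if_neg hab, hBdef]
        simp only [if_neg hab]
        rw [abs_neg]
        exact hCw _ _ n
    have hBnn : ∀ a b, 0 ≤ B a b := fun a b => le_trans (abs_nonneg _) (hB 0 a b)
    set C0 : ℝ := ∑ p : {z : V // z ≠ o} × {z : V // z ≠ o}, B p.1 p.2 with hC0def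
    have hC0nn : 0 ≤ C0 := Finset.sum_nonneg fun p _ => hBnn p.1 p.2
    have hC0b : ∀ n (p : {z : V // z ≠ o} × {z : V // z ≠ o}), |A n p.1 p.2| ≤ C0 := by
      intro n p
      refine le_trans (hB n p.1 p.2) ?_
      exact Finset.single_le_sum (f := fun q : {z : V // z ≠ o} × {z : V // z ≠ o} => B q.1 q.2)
        (fun q _ => hBnn q.1 q.2) (Finset.mem_univ p)
    set P : ℕ → ({z : V // z ≠ o} × {z : V // z ≠ o} → ℝ) := fun n p => A n p.1 p.2 with hPdef
    have hPmem : ∀ n, P n ∈ Metric.closedBall (0 : {z : V // z ≠ o} × {z : V // z ≠ o} → ℝ) C0 := by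
      intro n
      rw [Metric.mem_closedBall, dist_pi_le_iff hC0nn]
      intro p
      rw [Real.dist_eq, Pi.zero_apply, sub_zero]
      exact hC0b n p
    obtain ⟨N0, -, φ, hφ, hPconv⟩ :=
      (isCompact_closedBall (0 : {z : V // z ≠ o} × {z : V // z ≠ o} → ℝ) C0).tendsto_subseq
        hPmem
    set N : Matrix {z : V // z ≠ o} {z : V // z ≠ o} ℝ := fun a b => N0 (a, b) with hNdef
    have hφt : Tendsto φ atTop atTop := hφ.tendsto_atTop
    have hAφ : ∀ a b, Tendsto (fun k => A (φ k) a b) atTop (nhds (N a b)) := by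
      intro a b
      exact tendsto_pi_nhds.1 hPconv (a, b)
    have hMulOne : Mlim * N = 1 := by
      ext a b
      have h1 : Tendsto (fun k => (M (φ k) * A (φ k)) a b) atTop (nhds ((Mlim * N) a b)) := by
        simp only [Matrix.mul_apply]
        exact tendsto_finset_sum _ fun c _ => ((hMt a c).comp hφt).mul (hAφ c b)
      have h2 : (fun k => (M (φ k) * A (φ k)) a b)
          = fun _ => (1 : Matrix {z : V // z ≠ o} {z : V // z ≠ o} ℝ) a b := by
        funext k
        rw [hMK (φ k), Matrix.nonsing_inv_mul _ (isUnit_iff_ne_zero.2 (hdetn (φ k)))]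
      rw [h2] at h1
      exact (tendsto_nhds_unique h1 tendsto_const_nhds)
    have hMlimdet : IsUnit Mlim.det := Matrix.isUnit_det_of_right_inverse hMulOne
    have hMlimdet0 : Mlim.det ≠ 0 := hMlimdet.ne_zero
    -- full convergence of the Laplacians
    have hdetM : Tendsto (fun n => (M n).det) atTop (nhds Mlim.det) :=
      ((continuous_id.matrix_det).tendsto Mlim).comp hMtend
    have hadjM : ∀ a b, Tendsto (fun n => (M n).adjugate a b) atTop (nhds (Mlim.adjugate a b)) := by
      intro a b
      have hcont : Tendsto (fun n => (M n).adjugate) atTop (nhds Mlim.adjugate) :=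
        ((continuous_id.matrix_adjugate).tendsto Mlim).comp hMtend
      exact tendsto_pi_nhds.1 (tendsto_pi_nhds.1 hcont a) b
    have hAconv : ∀ a b, Tendsto (fun n => A n a b) atTop (nhds (Mlim⁻¹ a b)) := by
      intro a b
      have hAn : ∀ n, A n a b = ((M n).det)⁻¹ * (M n).adjugate a b := by
        intro n
        have h1 : A n = (M n)⁻¹ := by
          rw [hMK n, Matrix.nonsing_inv_nonsing_inv _ (isUnit_iff_ne_zero.2 (hdetn n))]
        rw [h1, Matrix.inv_def, Matrix.smul_apply, Ring.inverse_eq_inv, smul_eq_mul]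
      have hMl : Mlim⁻¹ a b = (Mlim.det)⁻¹ * Mlim.adjugate a b := by
        rw [Matrix.inv_def, Matrix.smul_apply, Ring.inverse_eq_inv, smul_eq_mul]
      rw [hMl]
      simp only [hAn]
      exact (hdetM.inv₀ hMlimdet0).mul (hadjM a b)
    -- convergence of the conductances
    have hconv : ∀ x y : V, ∃ l : ℝ, Tendsto (fun n => w n x y) atTop (nhds l) := by
      intro x y
      by_cases hxy : x = y
      · subst hxy
        refine ⟨0, ?_⟩
        have h0 : (fun n => w n x x) = fun _ => (0:ℝ) := funext fun n => (hcond n).2.2 x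
        rw [h0]; exact tendsto_const_nhds
      by_cases hx : x = o
      · have hy : y ≠ o := fun h => hxy (hx.trans h.symm)
        refine ⟨∑ c : {z : V // z ≠ o}, Mlim⁻¹ ⟨y, hy⟩ c, ?_⟩
        have hrow : ∀ n, w n x y = ∑ c : {z : V // z ≠ o}, A n ⟨y, hy⟩ c := by
          intro n
          rw [hx, show w n o y = w n y o from (hcond n).2.1 o y]
          exact (ERaux_row_sum (w n) (hcond n).2.2 o ⟨y, hy⟩).symm
        simp only [hrow]
        exact tendsto_finset_sum _ fun c _ => hAconv ⟨y, hy⟩ c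
      by_cases hy : y = o
      · refine ⟨∑ c : {z : V // z ≠ o}, Mlim⁻¹ ⟨x, hx⟩ c, ?_⟩
        have hrow : ∀ n, w n x y = ∑ c : {z : V // z ≠ o}, A n ⟨x, hx⟩ c := by
          intro n
          rw [hy]
          exact (ERaux_row_sum (w n) (hcond n).2.2 o ⟨x, hx⟩).symm
        simp only [hrow]
        exact tendsto_finset_sum _ fun c _ => hAconv ⟨x, hx⟩ c
      · refine ⟨-(Mlim⁻¹ ⟨x, hx⟩ ⟨y, hy⟩), ?_⟩
        have hab : ¬ (⟨x, hx⟩ : {z : V // z ≠ o}) = ⟨y, hy⟩ :=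
          fun h => hxy (congrArg Subtype.val h)
        have hOff : ∀ n, w n x y = -(A n ⟨x, hx⟩ ⟨y, hy⟩) := by
          intro n
          rw [hApp, if_neg hab]
          ring
        simp only [hOff]
        exact (hAconv ⟨x, hx⟩ ⟨y, hy⟩).neg
    choose wl hwl using hconv
    have hwcond : IsConductance wl := by
      refine ⟨?_, ?_, ?_⟩
      · intro x y
        exact ge_of_tendsto (hwl x y) (Filter.Eventually.of_forall fun n => (hcond n).1 x y)
      · intro x y
        exact tendsto_nhds_unique (hwl x y) ((hwl y x).congr fun n => (hcond n).2.1 y x)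
      · intro x
        refine tendsto_nhds_unique (hwl x x) ?_
        have h0 : (fun n => w n x x) = fun _ => (0:ℝ) := funext fun n => (hcond n).2.2 x
        rw [h0]; exact tendsto_const_nhds
    have hAlim : Lmat wl o = Mlim⁻¹ := by
      ext a b
      refine tendsto_nhds_unique ?_ (hAconv a b)
      by_cases hab : a = b
      · subst hab
        have h2 : Lmat wl o a a = ∑ y, wl (a : V) y := if_pos rfl
        rw [h2]
        have h1 : (fun n => A n a a) = fun n => ∑ y, w n (a : V) y :=
          funext fun n => by rw [hApp, if_pos rfl]
        rw [h1]
        exact tendsto_finset_sum _ fun y _ => hwl (a : V) y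
      · have h2 : Lmat wl o a b = -(wl (a : V) (b : V)) := if_neg hab
        rw [h2]
        have h1 : (fun n => A n a b) = fun n => -(w n (a : V) (b : V)) :=
          funext fun n => by rw [hApp, if_neg hab]
        rw [h1]
        exact (hwl _ _).neg
    have hdetl : (Lmat wl o).det ≠ 0 := by
      rw [hAlim]
      exact (Matrix.isUnit_nonsing_inv_det Mlim hMlimdet).ne_zero
    have hKl : (Lmat wl o)⁻¹ = Mlim := by
      rw [hAlim, Matrix.nonsing_inv_nonsing_inv _ hMlimdet]
    refine ⟨wl, hwcond, hwl, ?_⟩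
    intro x y
    by_cases hxy : x = y
    · subst hxy; simp [effRes, hRdiag x]
    · rw [ERaux_effRes_eq wl hwcond o hdetl x y hxy, hKl]
      by_cases hx : x = o
      · have hy : y ≠ o := fun h => hxy (hx.trans h.symm)
        have hq := ERaux_quad_ob o Mlim ⟨y, hy⟩
        rw [show ((⟨y, hy⟩ : {z : V // z ≠ o}) : V) = y from rfl] at hq
        rw [hx, hq]
        show R o y = (R y o + R y o - R y y) / 2
        rw [hRdiag y, hRsymm o y]
        ring
      by_cases hy : y = o
      · rw [hy]
        have hq := ERaux_quad_ao o Mlim ⟨x, hx⟩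
        rw [show ((⟨x, hx⟩ : {z : V // z ≠ o}) : V) = x from rfl] at hq
        rw [hq]
        show R x o = (R x o + R x o - R x x) / 2
        rw [hRdiag x]
        ring
      · have hq := ERaux_quad_ab o Mlim ⟨x, hx⟩ ⟨y, hy⟩
        rw [show ((⟨x, hx⟩ : {z : V // z ≠ o}) : V) = x from rfl,
          show ((⟨y, hy⟩ : {z : V // z ≠ o}) : V) = y from rfl] at hq
        rw [hq]
        show R x y = (R x o + R x o - R x x) / 2 + (R y o + R y o - R y y) / 2
            - (R x o + R y o - R x y) / 2 - (R y o + R x o - R y x) / 2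
        rw [hRdiag x, hRdiag y, show R y x = R x y from (hRsymm x y).symm]
        ring
end

section
/- Let (V, w) be a finite electrical network and let G be the graph on V whose edges are the pairs with positive conductance. Let x, y, z₁, …, z_N ∈ V with x ≠ y and x ∉ {z₁, …, z_N}, and suppose that {z₁, …, z_N} separates x from y in G, i.e., every path in G from x to y passes through some z_i. Let K_x be the network induced on the set of vertices of V that are not strictly separated from x by {z₁, …, z_N} (a vertex v ∉ {z₁, …, z_N} is strictly separated from x if every path in G from x to v passes through some z_i), with conductances given by the restriction of w. Then, with effective resistances taken with values in [0,∞] (and the convention that the reciprocal of ∞ is 0), one has R_G(x,y)^{-1} ≤ Σ_{i=1}^{N} R_{K_x}(x, z_i)^{-1}. -/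
open scoped Classical

/-- The effective resistance associated with the network `(V, w)`, with values in `[0, ∞]`
(with the convention `1/0 = ∞`). -/
noncomputable def effResE {V : Type*} [Fintype V] (w : V → V → ℝ) (x y : V) : ENNReal :=
  if x = y then 0
  else (ENNReal.ofReal (sInf {e : ℝ | ∃ f : V → ℝ, f x = 1 ∧ f y = 0 ∧ energy w f = e}))⁻¹

/-- The graph on `V` whose edges are the pairs with positive conductance. -/
def netGraph {V : Type*} (w : V → V → ℝ) : SimpleGraph V :=
  SimpleGraph.fromRel (fun a b => 0 < w a b)

/-- A vertex `v ∉ {z₁, …, z_N}` is strictly separated from `x` by `{z₁, …, z_N}` if every path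
in the graph of `w` from `x` to `v` passes through some `z i`. -/
def StrictlySeparated {V : Type*} (w : V → V → ℝ) {N : ℕ} (z : Fin N → V) (x v : V) : Prop :=
  (∀ i, v ≠ z i) ∧ ∀ p : (netGraph w).Walk x v, ∃ i, z i ∈ p.support

private lemma clamp_abs (s t : ℝ) :
    |max 0 (min 1 s) - max 0 (min 1 t)| ≤ |s - t| := by
  calc |max 0 (min 1 s) - max 0 (min 1 t)|
      = |max (min 1 s) 0 - max (min 1 t) 0| := by rw [max_comm (0:ℝ), max_comm (0:ℝ)]
    _ ≤ |min 1 s - min 1 t| := abs_max_sub_max_le_abs _ _ _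
    _ ≤ max |1 - 1| |s - t| := abs_min_sub_min_le_max _ _ _ _
    _ = |s - t| := by simp

private lemma abs_fold_min_sub {ι : Type*} [DecidableEq ι] (s : Finset ι) (u v : ι → ℝ) :
    |s.fold min 1 u - s.fold min 1 v| ≤ s.fold max 0 (fun i => |u i - v i|) := by
  induction s using Finset.induction_on with
  | empty => simp
  | @insert a s ha ih =>
    rw [Finset.fold_insert ha, Finset.fold_insert ha, Finset.fold_insert ha]
    calc |min (u a) (s.fold min 1 u) - min (v a) (s.fold min 1 v)|
        ≤ max |u a - v a| |s.fold min 1 u - s.fold min 1 v| :=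
          abs_min_sub_min_le_max _ _ _ _
      _ ≤ max |u a - v a| (s.fold max 0 fun i => |u i - v i|) := max_le_max le_rfl ih

private lemma sq_fold_max_le {ι : Type*} [DecidableEq ι] (s : Finset ι) (h : ι → ℝ) :
    (s.fold max 0 h) ^ 2 ≤ ∑ i ∈ s, (h i) ^ 2 := by
  induction s using Finset.induction_on with
  | empty => simp
  | @insert a s ha ih =>
    rw [Finset.fold_insert ha, Finset.sum_insert ha]
    have hs : (0:ℝ) ≤ ∑ i ∈ s, (h i) ^ 2 :=
      Finset.sum_nonneg fun i _ => sq_nonneg _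
    rcases max_cases (h a) (s.fold max 0 h) with ⟨heq, _⟩ | ⟨heq, _⟩ <;> rw [heq]
    · linarith
    · have := sq_nonneg (h a); linarith

private lemma fold_min_sq_le {ι : Type*} [DecidableEq ι] (s : Finset ι) (u v : ι → ℝ) :
    (s.fold min 1 u - s.fold min 1 v) ^ 2 ≤ ∑ i ∈ s, (u i - v i) ^ 2 := by
  calc (s.fold min 1 u - s.fold min 1 v) ^ 2
      = |s.fold min 1 u - s.fold min 1 v| ^ 2 := (sq_abs _).symm
    _ ≤ (s.fold max 0 fun i => |u i - v i|) ^ 2 :=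
        pow_le_pow_left₀ (abs_nonneg _) (abs_fold_min_sub s u v) 2
    _ ≤ ∑ i ∈ s, |u i - v i| ^ 2 := sq_fold_max_le s _
    _ = ∑ i ∈ s, (u i - v i) ^ 2 := by simp [sq_abs]

/-- Generalized parallel law: if `{z₁, …, z_N}` separates `x` from `y` in the graph of the
network `(V, w)`, and `K_x` is the network induced on the vertices not strictly separated from
`x` (realized by setting the conductance to zero outside this set), then
`R(x,y)⁻¹ ≤ ∑ i, R_{K_x}(x, z i)⁻¹`. -/
theorem gen_parallel_law {V : Type*} [Fintype V] (w : V → V → ℝ) (hw : IsConductance w)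
    {N : ℕ} (x y : V) (z : Fin N → V)
    (hxy : x ≠ y) (hxz : ∀ i, x ≠ z i)
    (hsep : ∀ p : (netGraph w).Walk x y, ∃ i, z i ∈ p.support)
    (wK : V → V → ℝ)
    (hwK : ∀ a b, wK a b =
      if ¬ StrictlySeparated w z x a ∧ ¬ StrictlySeparated w z x b then w a b else 0) :
    (effResE w x y)⁻¹ ≤ ∑ i : Fin N, (effResE wK x (z i))⁻¹ := by
  classical
  obtain ⟨hw0, hwsym, hwdiag⟩ := hw
  have hwK0 : ∀ a b, 0 ≤ wK a b := by
    intro a b; rw [hwK]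
    split
    · exact hw0 a b
    · exact le_rfl
  have energy_nonneg : ∀ (u : V → V → ℝ), (∀ a b, 0 ≤ u a b) → ∀ f : V → ℝ, 0 ≤ energy u f := by
    intro u hu f
    unfold energy
    apply mul_nonneg (by norm_num)
    exact Finset.sum_nonneg fun a _ => Finset.sum_nonneg fun b _ =>
      mul_nonneg (hu a b) (sq_nonneg _)
  -- the sets of energies
  have hSwbdd : BddBelow {e : ℝ | ∃ f : V → ℝ, f x = 1 ∧ f y = 0 ∧ energy w f = e} :=
    ⟨0, by rintro e ⟨f, _, _, rfl⟩; exact energy_nonneg w hw0 f⟩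
  have hSine : ∀ i : Fin N,
      ({e : ℝ | ∃ f : V → ℝ, f x = 1 ∧ f (z i) = 0 ∧ energy wK f = e}).Nonempty := by
    intro i
    refine ⟨_, fun v => if v = x then 1 else 0, by simp, ?_, rfl⟩
    simp only [if_neg (fun h : z i = x => hxz i h.symm)]
  have hSinonneg : ∀ i : Fin N,
      0 ≤ sInf {e : ℝ | ∃ f : V → ℝ, f x = 1 ∧ f (z i) = 0 ∧ energy wK f = e} := fun i =>
    Real.sInf_nonneg (by rintro e ⟨f, _, _, rfl⟩; exact energy_nonneg wK hwK0 f)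
  -- x is not strictly separated from itself
  have hxnSS : ¬ StrictlySeparated w z x x := by
    rintro ⟨h1, h2⟩
    obtain ⟨i, hi⟩ := h2 SimpleGraph.Walk.nil
    simp only [SimpleGraph.Walk.support_nil, List.mem_singleton] at hi
    exact hxz i hi.symm
  -- a non-separated vertex adjacent to a separated one must be a cut vertex
  have key_adj : ∀ a b : V, 0 < w a b → ¬ StrictlySeparated w z x a →
      StrictlySeparated w z x b → ∃ j, a = z j := by
    intro a b hab hna hb
    by_contra hcon
    push_neg at hcon
    rw [StrictlySeparated, not_and] at hna
    have h2 := hna hcon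
    push_neg at h2
    obtain ⟨p, hp⟩ := h2
    have hadj : (netGraph w).Adj a b := by
      refine (SimpleGraph.fromRel_adj _ _ _).mpr ⟨?_, Or.inl hab⟩
      rintro rfl
      rw [hwdiag] at hab
      exact lt_irrefl 0 hab
    obtain ⟨i, hi⟩ := hb.2 (p.concat hadj)
    rw [SimpleGraph.Walk.support_concat, List.mem_append,
      List.mem_singleton] at hi
    rcases hi with hi | hi
    · exact hp i hi
    · exact hb.1 i hi.symm
  -- the main real inequality between the infima
  have main : sInf {e : ℝ | ∃ f : V → ℝ, f x = 1 ∧ f y = 0 ∧ energy w f = e}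
      ≤ ∑ i : Fin N, sInf {e : ℝ | ∃ f : V → ℝ, f x = 1 ∧ f (z i) = 0 ∧ energy wK f = e} := by
    apply le_of_forall_pos_le_add
    intro ε hε
    have hδ : (0:ℝ) < ε / (N + 1) := by positivity
    have hpick : ∀ i : Fin N, ∃ e ∈ {e : ℝ | ∃ f : V → ℝ, f x = 1 ∧ f (z i) = 0 ∧
        energy wK f = e}, e < sInf {e : ℝ | ∃ f : V → ℝ, f x = 1 ∧ f (z i) = 0 ∧
        energy wK f = e} + ε / (N + 1) := fun i => Real.lt_sInf_add_pos (hSine i) hδ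
    choose e he hlt using hpick
    choose fi hfix hfiz hfie using he
    -- truncated test functions and the glued function
    set g : Fin N → V → ℝ := fun i v => max 0 (min 1 (fi i v)) with hg
    set F : V → ℝ := fun v => if StrictlySeparated w z x v then 0
      else Finset.univ.fold min 1 (fun i => g i v) with hF
    have hFx : F x = 1 := by
      rw [hF]
      simp only [if_neg hxnSS]
      apply le_antisymm
      · exact (Finset.fold_min_le _).mpr (Or.inl le_rfl)
      · refine (Finset.le_fold_min _).mpr ⟨le_rfl, fun i _ => ?_⟩
        rw [hg]
        simp only [hfix i]
        norm_num
    have hFz : ∀ (v : V) (j : Fin N), v = z j → F v = 0 := by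
      intro v j hv
      rw [hF]
      simp only
      split
      · rfl
      · apply le_antisymm
        · refine (Finset.fold_min_le _).mpr (Or.inr ⟨j, Finset.mem_univ j, ?_⟩)
          rw [hg]
          simp only [hv, hfiz j]
          norm_num
        · exact (Finset.le_fold_min _).mpr ⟨zero_le_one, fun i _ => le_max_left _ _⟩
    have hFy : F y = 0 := by
      by_cases hyss : StrictlySeparated w z x y
      · rw [hF]; simp only [if_pos hyss]
      · by_cases hyz : ∃ j, y = z j
        · obtain ⟨j, hj⟩ := hyz; exact hFz y j hj
        · exfalso
          push_neg at hyz
          rw [StrictlySeparated, not_and] at hyss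
          have h2 := hyss hyz
          push_neg at h2
          obtain ⟨p, hp⟩ := h2
          obtain ⟨i, hi⟩ := hsep p
          exact hp i hi
    -- pointwise energy comparison
    have hpt : ∀ a b : V, w a b * (F a - F b) ^ 2
        ≤ ∑ i : Fin N, wK a b * (g i a - g i b) ^ 2 := by
      intro a b
      have hRnn : (0:ℝ) ≤ ∑ i : Fin N, wK a b * (g i a - g i b) ^ 2 :=
        Finset.sum_nonneg fun i _ => mul_nonneg (hwK0 a b) (sq_nonneg _)
      rcases lt_or_ge 0 (w a b) with hab | hab
      · by_cases hA : StrictlySeparated w z x a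
        · by_cases hB : StrictlySeparated w z x b
          · have ha0 : F a = 0 := by rw [hF]; simp only [if_pos hA]
            have hb0 : F b = 0 := by rw [hF]; simp only [if_pos hB]
            rw [ha0, hb0]
            simpa using hRnn
          · obtain ⟨j, hj⟩ := key_adj b a (by rw [hwsym b a]; exact hab) hB hA
            have ha0 : F a = 0 := by rw [hF]; simp only [if_pos hA]
            rw [ha0, hFz b j hj]
            simpa using hRnn
        · by_cases hB : StrictlySeparated w z x b
          · obtain ⟨j, hj⟩ := key_adj a b hab hA hB
            have hb0 : F b = 0 := by rw [hF]; simp only [if_pos hB]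
            rw [hb0, hFz a j hj]
            simpa using hRnn
          · have hwKe : wK a b = w a b := by rw [hwK, if_pos ⟨hA, hB⟩]
            have hFa : F a = Finset.univ.fold min 1 (fun i => g i a) := by
              rw [hF]; simp only [if_neg hA]
            have hFb : F b = Finset.univ.fold min 1 (fun i => g i b) := by
              rw [hF]; simp only [if_neg hB]
            rw [hFa, hFb]
            calc w a b * (Finset.univ.fold min 1 (fun i => g i a)
                  - Finset.univ.fold min 1 (fun i => g i b)) ^ 2
                ≤ w a b * ∑ i : Fin N, (g i a - g i b) ^ 2 :=
                  mul_le_mul_of_nonneg_left (fold_min_sq_le _ _ _) (hw0 a b)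
              _ = ∑ i : Fin N, wK a b * (g i a - g i b) ^ 2 := by
                  rw [Finset.mul_sum]
                  exact Finset.sum_congr rfl fun i _ => by rw [hwKe]
      · have h0 : w a b = 0 := le_antisymm hab (hw0 a b)
        rw [h0]
        simpa using hRnn
    have hE1 : energy w F ≤ ∑ i : Fin N, energy wK (g i) := by
      unfold energy
      calc (1/2 : ℝ) * ∑ a, ∑ b, w a b * (F a - F b) ^ 2
          ≤ (1/2 : ℝ) * ∑ a, ∑ b, ∑ i : Fin N, wK a b * (g i a - g i b) ^ 2 := by
            apply mul_le_mul_of_nonneg_left _ (by norm_num)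
            exact Finset.sum_le_sum fun a _ => Finset.sum_le_sum fun b _ => hpt a b
        _ = ∑ i : Fin N, (1/2 : ℝ) * ∑ a, ∑ b, wK a b * (g i a - g i b) ^ 2 := by
            rw [← Finset.mul_sum]
            congr 1
            calc ∑ a, ∑ b, ∑ i : Fin N, wK a b * (g i a - g i b) ^ 2
                = ∑ a, ∑ i : Fin N, ∑ b, wK a b * (g i a - g i b) ^ 2 :=
                  Finset.sum_congr rfl fun a _ => Finset.sum_comm
              _ = ∑ i : Fin N, ∑ a, ∑ b, wK a b * (g i a - g i b) ^ 2 := Finset.sum_comm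
    have hE2 : ∀ i : Fin N, energy wK (g i) ≤ energy wK (fi i) := by
      intro i
      unfold energy
      apply mul_le_mul_of_nonneg_left _ (by norm_num)
      refine Finset.sum_le_sum fun a _ => Finset.sum_le_sum fun b _ => ?_
      apply mul_le_mul_of_nonneg_left _ (hwK0 a b)
      rw [← sq_abs (g i a - g i b), ← sq_abs (fi i a - fi i b)]
      exact pow_le_pow_left₀ (abs_nonneg _) (clamp_abs _ _) 2
    have hNle : (N : ℝ) * (ε / (N + 1)) ≤ ε := by
      have h1 : (0:ℝ) < (N:ℝ) + 1 := by positivity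
      rw [mul_div_assoc', div_le_iff₀ h1]
      nlinarith
    calc sInf {e : ℝ | ∃ f : V → ℝ, f x = 1 ∧ f y = 0 ∧ energy w f = e}
        ≤ energy w F := csInf_le hSwbdd ⟨F, hFx, hFy, rfl⟩
      _ ≤ ∑ i : Fin N, energy wK (g i) := hE1
      _ ≤ ∑ i : Fin N, energy wK (fi i) := Finset.sum_le_sum fun i _ => hE2 i
      _ = ∑ i : Fin N, e i := Finset.sum_congr rfl fun i _ => hfie i
      _ ≤ ∑ i : Fin N, (sInf {e : ℝ | ∃ f : V → ℝ, f x = 1 ∧ f (z i) = 0 ∧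
            energy wK f = e} + ε / (N + 1)) := Finset.sum_le_sum fun i _ => (hlt i).le
      _ = (∑ i : Fin N, sInf {e : ℝ | ∃ f : V → ℝ, f x = 1 ∧ f (z i) = 0 ∧
            energy wK f = e}) + N * (ε / (N + 1)) := by
          rw [Finset.sum_add_distrib, Finset.sum_const, Finset.card_univ, Fintype.card_fin,
            nsmul_eq_mul]
      _ ≤ (∑ i : Fin N, sInf {e : ℝ | ∃ f : V → ℝ, f x = 1 ∧ f (z i) = 0 ∧
            energy wK f = e}) + ε := by linarith
  -- translate to ENNReal
  have hL : (effResE w x y)⁻¹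
      = ENNReal.ofReal (sInf {e : ℝ | ∃ f : V → ℝ, f x = 1 ∧ f y = 0 ∧ energy w f = e}) := by
    rw [effResE, if_neg hxy, inv_inv]
  have hR : ∀ i : Fin N, (effResE wK x (z i))⁻¹
      = ENNReal.ofReal (sInf {e : ℝ | ∃ f : V → ℝ, f x = 1 ∧ f (z i) = 0 ∧
        energy wK f = e}) := fun i => by
    rw [effResE, if_neg (hxz i), inv_inv]
  rw [hL]
  calc ENNReal.ofReal (sInf {e : ℝ | ∃ f : V → ℝ, f x = 1 ∧ f y = 0 ∧ energy w f = e})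
      ≤ ENNReal.ofReal (∑ i : Fin N, sInf {e : ℝ | ∃ f : V → ℝ, f x = 1 ∧ f (z i) = 0 ∧
          energy wK f = e}) := ENNReal.ofReal_le_ofReal main
    _ = ∑ i : Fin N, ENNReal.ofReal (sInf {e : ℝ | ∃ f : V → ℝ, f x = 1 ∧ f (z i) = 0 ∧
          energy wK f = e}) := ENNReal.ofReal_sum_of_nonneg (fun i _ => hSinonneg i)
    _ = ∑ i : Fin N, (effResE wK x (z i))⁻¹ := Finset.sum_congr rfl fun i _ => (hR i).symm
end

section
/- Let (V, w) be a connected finite electrical network, let x₀, y₀ ∈ V be two distinct vertices with w(x₀,y₀) > 0, and let R be the effective resistance associated with (V, w). For x ≠ y define the contracted resistance R'(x,y) = (inf{E_w(f,f) : f : V → ℝ, f(x) = 1, f(y) = 0, f(x₀) = f(y₀)})^{-1} (which is the effective resistance of the network obtained from (V, w) by contracting the edge (x₀,y₀) to a single vertex). Then R(x,y) ≤ R'(x,y) + 1/w(x₀,y₀) for all x, y ∈ V. -/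
open scoped Classical

lemma energy_nonneg' {V : Type*} [Fintype V] {w : V → V → ℝ}
    (hw : ∀ x y, 0 ≤ w x y) (f : V → ℝ) : 0 ≤ energy w f := by
  unfold energy
  apply mul_nonneg (by norm_num)
  apply Finset.sum_nonneg; intro x _
  apply Finset.sum_nonneg; intro y _
  exact mul_nonneg (hw x y) (sq_nonneg _)

lemma energy_ge_edge' {V : Type*} [Fintype V] {w : V → V → ℝ}
    (hw : IsConductance w) {x₀ y₀ : V} (hne : x₀ ≠ y₀) (f : V → ℝ) :
    w x₀ y₀ * (f x₀ - f y₀) ^ 2 ≤ energy w f := by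
  obtain ⟨hnn, hsymm, _⟩ := hw
  set g : V → ℝ := fun a => ∑ y, w a y * (f a - f y) ^ 2 with hg
  have hgnn : ∀ a, 0 ≤ g a := fun a =>
    Finset.sum_nonneg fun y _ => mul_nonneg (hnn a y) (sq_nonneg _)
  have h1 : ∀ a b : V, w a b * (f a - f b) ^ 2 ≤ g a := fun a b =>
    Finset.single_le_sum (f := fun y => w a y * (f a - f y) ^ 2)
      (fun y _ => mul_nonneg (hnn a y) (sq_nonneg _)) (Finset.mem_univ b)
  have h2 : g x₀ + g y₀ ≤ ∑ a, g a := by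
    have := Finset.sum_le_sum_of_subset_of_nonneg
      (Finset.subset_univ ({x₀, y₀} : Finset V)) (fun a _ _ => hgnn a)
    rwa [Finset.sum_pair hne] at this
  have h3 : w x₀ y₀ * (f x₀ - f y₀) ^ 2 + w y₀ x₀ * (f y₀ - f x₀) ^ 2 ≤ ∑ a, g a :=
    le_trans (add_le_add (h1 x₀ y₀) (h1 y₀ x₀)) h2
  have h4 : w y₀ x₀ * (f y₀ - f x₀) ^ 2 = w x₀ y₀ * (f x₀ - f y₀) ^ 2 := by
    rw [hsymm y₀ x₀]; ring
  rw [h4] at h3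
  unfold energy
  linarith
noncomputable def Bform {V : Type*} [Fintype V] (w : V → V → ℝ) (g h : V → ℝ) : ℝ :=
  (1 / 2) * ∑ x, ∑ y, w x y * (g x - g y) * (h x - h y)

lemma energy_expand' {V : Type*} [Fintype V] (w : V → V → ℝ) (g h : V → ℝ) (t : ℝ) :
    energy w (fun a => g a + t * h a) =
      energy w g + 2 * t * Bform w g h + t ^ 2 * energy w h := by
  unfold energy Bform
  have key : ∀ x y : V, w x y * ((g x + t * h x) - (g y + t * h y)) ^ 2 =
      w x y * (g x - g y) ^ 2 + (2 * t) * (w x y * (g x - g y) * (h x - h y))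
        + t ^ 2 * (w x y * (h x - h y) ^ 2) := fun x y => by ring
  simp_rw [key, Finset.sum_add_distrib, ← Finset.mul_sum]
  ring

lemma Bform_symm' {V : Type*} [Fintype V] (w : V → V → ℝ) (g h : V → ℝ) :
    Bform w g h = Bform w h g := by
  unfold Bform
  have key : ∀ x y : V, w x y * (g x - g y) * (h x - h y)
      = w x y * (h x - h y) * (g x - g y) := fun x y => by ring
  simp_rw [key]

lemma Bform_sub_const' {V : Type*} [Fintype V] (w : V → V → ℝ) (u g : V → ℝ) (c : ℝ) :
    Bform w u (fun a => g a - c) = Bform w u g := by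
  unfold Bform
  norm_num

lemma energy_affine' {V : Type*} [Fintype V] (w : V → V → ℝ) (g : V → ℝ) (c k : ℝ) :
    energy w (fun a => c * g a + k) = c ^ 2 * energy w g := by
  unfold energy
  have key : ∀ x y : V, w x y * ((c * g x + k) - (c * g y + k)) ^ 2 =
      c ^ 2 * (w x y * (g x - g y) ^ 2) := fun x y => by ring
  simp_rw [key, ← Finset.mul_sum]
  ring
lemma clamp_sq_le' (a b : ℝ) :
    (max (min a 1) 0 - max (min b 1) 0) ^ 2 ≤ (a - b) ^ 2 := by
  have h1 : |max (min a 1) 0 - max (min b 1) 0| ≤ |min a 1 - min b 1| :=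
    abs_max_sub_max_le_abs _ _ _
  have h2 : |min a 1 - min b 1| ≤ max |a - b| |(1:ℝ) - 1| := abs_min_sub_min_le_max a 1 b 1
  simp only [sub_self, abs_zero, max_eq_left (abs_nonneg (a - b))] at h2
  have := h1.trans h2
  calc (max (min a 1) 0 - max (min b 1) 0) ^ 2
      = |max (min a 1) 0 - max (min b 1) 0| ^ 2 := (sq_abs _).symm
    _ ≤ |a - b| ^ 2 := by
        exact pow_le_pow_left₀ (abs_nonneg _) this 2
    _ = (a - b) ^ 2 := sq_abs _

lemma energy_clamp_le' {V : Type*} [Fintype V] {w : V → V → ℝ}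
    (hnn : ∀ x y, 0 ≤ w x y) (f : V → ℝ) :
    energy w (fun a => max (min (f a) 1) 0) ≤ energy w f := by
  unfold energy
  apply mul_le_mul_of_nonneg_left _ (by norm_num)
  apply Finset.sum_le_sum; intro x _
  apply Finset.sum_le_sum; intro y _
  exact mul_le_mul_of_nonneg_left (clamp_sq_le' (f x) (f y)) (hnn x y)

lemma energy_continuous' {V : Type*} [Fintype V] (w : V → V → ℝ) :
    Continuous fun f : V → ℝ => energy w f := by
  unfold energy
  apply Continuous.mul continuous_const
  apply continuous_finset_sum; intro x _
  apply continuous_finset_sum; intro y _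
  exact Continuous.mul continuous_const (((continuous_apply x).sub (continuous_apply y)).pow 2)

lemma exists_min_u' {V : Type*} [Fintype V] (w : V → V → ℝ) (hw : IsConductance w)
    (x₀ y₀ : V) (hne : x₀ ≠ y₀) :
    ∃ u : V → ℝ, u x₀ = 1 ∧ u y₀ = 0 ∧ (∀ a, 0 ≤ u a ∧ u a ≤ 1) ∧
      ∀ v : V → ℝ, v x₀ = 1 → v y₀ = 0 → energy w u ≤ energy w v := by
  classical
  set K : Set (V → ℝ) :=
    {u | (∀ a, u a ∈ Set.Icc (0:ℝ) 1) ∧ u x₀ = 1 ∧ u y₀ = 0} with hK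
  have hKc : IsCompact K := by
    have h1 : IsCompact (Set.pi Set.univ fun _ : V => Set.Icc (0:ℝ) 1) :=
      isCompact_univ_pi fun _ => isCompact_Icc
    have h2 : IsClosed ({u : V → ℝ | u x₀ = 1} ∩ {u | u y₀ = 0}) :=
      (isClosed_eq (continuous_apply x₀) continuous_const).inter
        (isClosed_eq (continuous_apply y₀) continuous_const)
    have : K = (Set.pi Set.univ fun _ : V => Set.Icc (0:ℝ) 1)
        ∩ ({u : V → ℝ | u x₀ = 1} ∩ {u | u y₀ = 0}) := by
      ext u
      simp only [hK, Set.mem_setOf_eq, Set.mem_inter_iff, Set.mem_univ_pi, Set.mem_Icc, and_assoc]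
    rw [this]
    exact h1.inter_right h2
  have hKne : K.Nonempty := by
    refine ⟨fun a => if a = x₀ then 1 else 0, fun a => ?_, by simp, by simp [hne.symm]⟩
    by_cases h : a = x₀ <;> simp [h]
  obtain ⟨u, huK, humin⟩ :=
    hKc.exists_isMinOn hKne (energy_continuous' w).continuousOn
  obtain ⟨hIcc, hu1, hu0⟩ := huK
  refine ⟨u, hu1, hu0, fun a => ⟨(hIcc a).1, (hIcc a).2⟩, ?_⟩
  intro v hv1 hv0
  have hclK : (fun a => max (min (v a) 1) 0) ∈ K := by
    refine ⟨fun a => ?_, by simp [hv1], by simp [hv0]⟩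
    constructor
    · exact le_max_right _ _
    · exact max_le (min_le_right _ _) zero_le_one
  exact (humin hclK).trans (energy_clamp_le' hw.1 v)
lemma euler_lagrange' {V : Type*} [Fintype V] {w : V → V → ℝ} (hw : IsConductance w)
    {x₀ y₀ : V} {u : V → ℝ} (hu1 : u x₀ = 1) (hu0 : u y₀ = 0)
    (hmin : ∀ v : V → ℝ, v x₀ = 1 → v y₀ = 0 → energy w u ≤ energy w v)
    (h : V → ℝ) (h1 : h x₀ = 0) (h0 : h y₀ = 0) : Bform w u h = 0 := by
  set B := Bform w u h with hB
  set Eh := energy w h with hEh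
  have hEh0 : 0 ≤ Eh := energy_nonneg' hw.1 h
  have key : ∀ t : ℝ, 0 ≤ 2 * t * B + t ^ 2 * Eh := by
    intro t
    have := hmin (fun a => u a + t * h a) (by simp [hu1, h1]) (by simp [hu0, h0])
    rw [energy_expand'] at this
    linarith
  have hp : (0:ℝ) < Eh + 1 := by linarith
  have h1' := key (-(B / (Eh + 1)))
  have hexp : 2 * (-(B / (Eh + 1))) * B + (-(B / (Eh + 1))) ^ 2 * Eh
      = -(B ^ 2 * (Eh + 2)) / (Eh + 1) ^ 2 := by
    field_simp
    ring
  rw [hexp] at h1'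
  have h2 : 0 ≤ -(B ^ 2 * (Eh + 2)) := by
    have := mul_le_mul_of_nonneg_right h1' (le_of_lt (pow_pos hp 2))
    simpa [div_mul_cancel₀, ne_of_gt (pow_pos hp 2)] using this
  nlinarith [sq_nonneg B]

lemma conn_lower_bound' {V : Type*} [Fintype V] {w : V → V → ℝ} (hw : IsConductance w)
    (hconn : NetworkConnected w) (x y : V) :
    ∃ δ : ℝ, 0 < δ ∧ ∀ f : V → ℝ, δ * (f x - f y) ^ 2 ≤ energy w f := by
  have h := hconn x y
  induction h with
  | refl => exact ⟨1, one_pos, fun f => by simpa using energy_nonneg' hw.1 f⟩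
  | @tail b c hxb hbc ih =>
    obtain ⟨δ, hδ, hδf⟩ := ih
    have hnebc : b ≠ c := by
      intro e; subst e; exact absurd hbc (by simp [hw.2.2 b])
    have hwbc : 0 < w b c := hbc
    refine ⟨δ * w b c / (2 * (δ + w b c)), by positivity, fun f => ?_⟩
    have e1 := hδf f
    have e2 := energy_ge_edge' hw hnebc f
    rw [div_mul_eq_mul_div, div_le_iff₀ (by positivity)]
    have hsplit : f x - f c = (f x - f b) + (f b - f c) := by ring
    rw [hsplit]
    nlinarith [mul_le_mul_of_nonneg_left e1 hwbc.le, mul_le_mul_of_nonneg_left e2 hδ.le,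
      mul_nonneg (mul_nonneg hδ.le hwbc.le) (sq_nonneg ((f x - f b) - (f b - f c))),
      energy_nonneg' hw.1 f]
/-- Contracting the edge `(x₀, y₀)` (with positive conductance) to a single vertex decreases the
effective resistance by at most `1 / w(x₀, y₀)`: here `R'` is the effective resistance of the
contracted network, defined directly via the energy minimization with the extra constraint
`f(x₀) = f(y₀)`. -/
theorem effRes_contraction {V : Type*} [Fintype V] (w : V → V → ℝ) (hw : IsConductance w)
    (hconn : NetworkConnected w)
    (x₀ y₀ : V) (hne : x₀ ≠ y₀) (hpos : 0 < w x₀ y₀)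
    (R' : V → V → ℝ)
    (hR' : ∀ x y, x ≠ y → R' x y =
      (sInf {e : ℝ | ∃ f : V → ℝ, f x = 1 ∧ f y = 0 ∧ f x₀ = f y₀ ∧ energy w f = e})⁻¹)
    (hR'diag : ∀ x, R' x x = 0) :
    ∀ x y, effRes w x y ≤ R' x y + 1 / w x₀ y₀ := by
  intro x y
  by_cases hxy : x = y
  · subst hxy
    rw [hR'diag]
    simp only [effRes, if_pos rfl]
    positivity
  set S : Set ℝ := {e | ∃ f : V → ℝ, f x = 1 ∧ f y = 0 ∧ energy w f = e} with hS
  set S' : Set ℝ :=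
    {e | ∃ f : V → ℝ, f x = 1 ∧ f y = 0 ∧ f x₀ = f y₀ ∧ energy w f = e} with hS'
  have heff : effRes w x y = (sInf S)⁻¹ := by rw [effRes, if_neg hxy]
  have hR'xy : R' x y = (sInf S')⁻¹ := hR' x y hxy
  have hSnn : ∀ e ∈ S, (0:ℝ) ≤ e := by rintro e ⟨f, -, -, rfl⟩; exact energy_nonneg' hw.1 f
  have hS'nn : ∀ e ∈ S', (0:ℝ) ≤ e := by rintro e ⟨f, -, -, -, rfl⟩; exact energy_nonneg' hw.1 f
  have hSne : S.Nonempty := by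
    refine ⟨energy w (fun a => if a = x then (1:ℝ) else 0), fun a => if a = x then 1 else 0,
      by simp, ?_, rfl⟩
    simp [Ne.symm hxy]
  by_cases hpair : (x = x₀ ∧ y = y₀) ∨ (x = y₀ ∧ y = x₀)
  · -- the contracted pair itself: use the direct edge bound
    have hlow : w x₀ y₀ ≤ sInf S := by
      apply le_csInf hSne
      rintro e ⟨f, hf1, hf0, rfl⟩
      have hedge := energy_ge_edge' hw hne f
      have hval : (f x₀ - f y₀) ^ 2 = 1 := by
        rcases hpair with ⟨hx, hy⟩ | ⟨hx, hy⟩ <;> rw [← hx, ← hy] <;>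
          simp [hf1, hf0] <;> norm_num
      rw [hval, mul_one] at hedge
      exact hedge
    have hR'0 : 0 ≤ R' x y := by
      rw [hR'xy]
      exact inv_nonneg.2 (Real.sInf_nonneg hS'nn)
    have hinv : (sInf S)⁻¹ ≤ (w x₀ y₀)⁻¹ := inv_anti₀ hpos hlow
    rw [heff, one_div] at *
    linarith
  · -- main case: x, y not the contracted pair
    -- S' is nonempty
    have hS'ne : S'.Nonempty := by
      set c : ℝ := if x₀ = x ∨ y₀ = x then 1 else 0 with hc
      set f₀ : V → ℝ := fun a => if a = x then 1 else if a = y then 0 else c with hf₀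
      have h1 : f₀ x = 1 := by simp [hf₀]
      have h0 : f₀ y = 0 := by simp [hf₀, Ne.symm hxy]
      have h2 : f₀ x₀ = f₀ y₀ := by
        by_cases e1 : x₀ = x
        · have hy₀x : y₀ ≠ x := fun h => hne (e1.trans h.symm)
          have hy₀y : y₀ ≠ y := fun h => hpair (Or.inl ⟨e1.symm, h.symm⟩)
          simp [hf₀, hc, e1, hy₀x, hy₀y]
        · by_cases e2 : y₀ = x
          · have hx₀y : x₀ ≠ y := fun h => hpair (Or.inr ⟨e2.symm, h.symm⟩)
            simp [hf₀, hc, e1, e2, hx₀y]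
          · have hcz : c = 0 := by simp [hc, e1, e2]
            by_cases e3 : x₀ = y
            · have hy₀y : y₀ ≠ y := fun h => hne (e3.trans h.symm)
              simp [hf₀, e1, e2, e3, hy₀y, hcz, Ne.symm hxy]
            · by_cases e4 : y₀ = y
              · simp [hf₀, e1, e2, e3, e4, hcz, Ne.symm hxy]
              · simp [hf₀, e1, e2, e3, e4, hcz, Ne.symm hxy]
      exact ⟨energy w f₀, f₀, h1, h0, h2, rfl⟩
    obtain ⟨δ, hδpos, hδf⟩ := conn_lower_bound' hw hconn x y
    have hm'pos : 0 < sInf S' := by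
      refine lt_of_lt_of_le hδpos (le_csInf hS'ne ?_)
      rintro e ⟨f, hf1, hf0, -, rfl⟩
      have := hδf f
      rw [hf1, hf0] at this
      simpa using this
    obtain ⟨u, hu1, hu0, huIcc, humin⟩ := exists_min_u' w hw x₀ y₀ hne
    have hEu_ge : w x₀ y₀ ≤ energy w u := by
      have := energy_ge_edge' hw hne u
      rw [hu1, hu0] at this
      simpa using this
    set m' := sInf S' with hm'
    set w₀ := w x₀ y₀ with hw₀
    clear_value m' w₀
    have hkey : ∀ e ∈ S, (1 / m' + 1 / w₀)⁻¹ ≤ e := by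
      rintro e ⟨f, hf1, hf0, rfl⟩
      set t : ℝ := f x₀ - f y₀ with ht
      set g : V → ℝ := fun a => f a - t * u a with hg
      have hgc : g x₀ = g y₀ := by
        simp only [hg, hu1, hu0]
        ring
      have hB : Bform w g u = 0 := by
        rw [Bform_symm']
        have hel := euler_lagrange' hw hu1 hu0 humin (fun a => g a - g x₀)
          (by show g x₀ - g x₀ = 0; ring)
          (by show g y₀ - g x₀ = 0; rw [hgc]; ring)
        rwa [Bform_sub_const'] at hel
      have hEf : energy w f = energy w g + t ^ 2 * energy w u := by
        have hexp := energy_expand' w g u t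
        have hfg : (fun a => g a + t * u a) = f := by
          funext a; simp only [hg]; ring
        rw [hfg, hB] at hexp
        rw [hexp]; ring
      have hEg : m' * (g x - g y) ^ 2 ≤ energy w g := by
        by_cases hd : g x - g y = 0
        · rw [hd]
          simpa using energy_nonneg' hw.1 g
        · set d : ℝ := g x - g y with hdd
          have hmem : energy w (fun a => (1 / d) * g a + (-(g y) / d)) ∈ S' := by
            refine ⟨fun a => (1 / d) * g a + (-(g y) / d), ?_, ?_, ?_, rfl⟩
            · show 1 / d * g x + -g y / d = 1
              field_simp [hdd]
              ring
            · show 1 / d * g y + -g y / d = 0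
              field_simp
              ring
            · show 1 / d * g x₀ + -g y / d = 1 / d * g y₀ + -g y / d
              rw [hgc]
          have hle : m' ≤ (1 / d) ^ 2 * energy w g := by
            have hcs := csInf_le ⟨0, hS'nn⟩ hmem
            rw [energy_affine'] at hcs
            rw [hm']
            exact hcs
          have hd2 : (0:ℝ) < d ^ 2 := by positivity
          have hmul := mul_le_mul_of_nonneg_right hle hd2.le
          have hsimp : (1 / d) ^ 2 * energy w g * d ^ 2 = energy w g := by
            field_simp
          rw [hsimp] at hmul
          exact hmul
      have hsum : (g x - g y) + t * (u x - u y) = 1 := by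
        have e1 : f x = g x + t * u x := by simp only [hg]; ring
        have e2 : f y = g y + t * u y := by simp only [hg]; ring
        rw [e1] at hf1
        rw [e2] at hf0
        linarith
      have hud : (u x - u y) ^ 2 ≤ 1 := by
        nlinarith [(huIcc x).1, (huIcc x).2, (huIcc y).1, (huIcc y).2]
      have hpoly : m' * w₀ ≤ (m' + w₀) * (energy w g + t ^ 2 * energy w u) := by
        set a : ℝ := g x - g y
        set dd : ℝ := u x - u y
        have hsq : (a + t * dd) ^ 2 = 1 := by rw [hsum]; norm_num
        have h2 : t ^ 2 * w₀ ≤ t ^ 2 * energy w u :=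
          mul_le_mul_of_nonneg_left hEu_ge (sq_nonneg t)
        have hKnn : (0:ℝ) ≤ m' + w₀ := by positivity
        have e3 := mul_le_mul_of_nonneg_left hEg hKnn
        have e4 := mul_le_mul_of_nonneg_left h2 hKnn
        have e5 : (0:ℝ) ≤ (w₀ ^ 2 + m' * w₀) * (t ^ 2 * (1 - dd ^ 2)) := by
          have h6 : (0:ℝ) ≤ t ^ 2 * (1 - dd ^ 2) :=
            mul_nonneg (sq_nonneg t) (by linarith)
          have h7 : (0:ℝ) ≤ w₀ ^ 2 + m' * w₀ := by positivity
          exact mul_nonneg h7 h6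
        have hsq2 : m' * w₀ * (a + t * dd) ^ 2 = m' * w₀ := by rw [hsq]; ring
        linarith [e3, e4, e5, sq_nonneg (m' * a - w₀ * t * dd), hsq2]
      have hKeq : 1 / m' + 1 / w₀ = (w₀ + m') / (m' * w₀) := by
        rw [div_add_div _ _ (ne_of_gt hm'pos) (ne_of_gt hpos), one_mul, mul_one]
      rw [hEf, hKeq, inv_div, div_le_iff₀ (add_pos hpos hm'pos)]
      calc m' * w₀ ≤ (m' + w₀) * (energy w g + t ^ 2 * energy w u) := hpoly
        _ = (energy w g + t ^ 2 * energy w u) * (w₀ + m') := by ring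
    have hlow : (1 / m' + 1 / w₀)⁻¹ ≤ sInf S := le_csInf hSne hkey
    have hfin : (sInf S)⁻¹ ≤ 1 / m' + 1 / w₀ := by
      have h := inv_anti₀ (by positivity) hlow
      rwa [inv_inv] at h
    rw [heff, hR'xy]
    simpa [one_div] using hfin
end

section
/- Let F₁, F₂ be two nonempty sets with F₁ ∩ F₂ = {z}. For i = 1, 2, let (E_i, 𝓕_i) be a resistance form on F_i with associated resistance metric R_i. Define 𝓕 = {f : F₁ ∪ F₂ → ℝ : f|_{F₁} ∈ 𝓕₁ and f|_{F₂} ∈ 𝓕₂} and E(f,f) = E₁(f|_{F₁}, f|_{F₁}) + E₂(f|_{F₂}, f|_{F₂}). Then (E, 𝓕) is a resistance form on F₁ ∪ F₂, and its associated resistance metric R satisfies: R(x,y) = R₁(x,y) for x, y ∈ F₁; R(x,y) = R₂(x,y) for x, y ∈ F₂; and R(x,y) = R₁(x,z) + R₂(z,y) for x ∈ F₁ and y ∈ F₂. -/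
open scoped Classical

/-- A resistance form `(En, Dom)` on a nonempty set `F` (Kigami).  `Dom` is a linear subspace
of the real-valued functions on `F` containing the constants; `En` is a nonnegative symmetric
bilinear form on `Dom` vanishing exactly on constants (RF1); the quotient of `Dom` by constants
is complete for the energy (pseudo-)norm (RF2, stated sequentially); `Dom` separates points
(RF3); the resistance suprema are finite (RF4); and the Markov/truncation property holds
(RF5). -/
structure IsResistanceForm (F : Type*) (En : (F → ℝ) → (F → ℝ) → ℝ)
    (Dom : Set (F → ℝ)) : Prop where
  nonempty : Nonempty F
  const_mem : ∀ c : ℝ, (fun _ => c) ∈ Dom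
  add_mem : ∀ ⦃f g : F → ℝ⦄, f ∈ Dom → g ∈ Dom → f + g ∈ Dom
  smul_mem : ∀ (c : ℝ) ⦃f : F → ℝ⦄, f ∈ Dom → c • f ∈ Dom
  symm : ∀ ⦃f g : F → ℝ⦄, f ∈ Dom → g ∈ Dom → En f g = En g f
  add_left : ∀ ⦃f g h : F → ℝ⦄, f ∈ Dom → g ∈ Dom → h ∈ Dom →
    En (f + g) h = En f h + En g h
  smul_left : ∀ (c : ℝ) ⦃f g : F → ℝ⦄, f ∈ Dom → g ∈ Dom → En (c • f) g = c * En f g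
  nonneg : ∀ ⦃f : F → ℝ⦄, f ∈ Dom → 0 ≤ En f f
  eq_zero_iff : ∀ ⦃f : F → ℝ⦄, f ∈ Dom → (En f f = 0 ↔ ∃ c : ℝ, f = fun _ => c)
  complete : ∀ u : ℕ → F → ℝ, (∀ n, u n ∈ Dom) →
    (∀ ε : ℝ, 0 < ε → ∃ N, ∀ m ≥ N, ∀ n ≥ N, En (u m - u n) (u m - u n) < ε) →
    ∃ g ∈ Dom, ∀ ε : ℝ, 0 < ε → ∃ N, ∀ n ≥ N, En (u n - g) (u n - g) < ε
  separates : ∀ ⦃x y : F⦄, x ≠ y → ∃ f ∈ Dom, f x ≠ f y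
  bddAbove : ∀ x y : F,
    BddAbove {r : ℝ | ∃ f ∈ Dom, 0 < En f f ∧ r = (f x - f y) ^ 2 / En f f}
  markov : ∀ ⦃f : F → ℝ⦄, f ∈ Dom →
    (fun t => min (max (f t) 0) 1) ∈ Dom ∧
    En (fun t => min (max (f t) 0) 1) (fun t => min (max (f t) 0) 1) ≤ En f f

/-- The resistance metric associated with a resistance form:
`R(x,y) = sup {(f x - f y)² / En f f}` for `x ≠ y`, and `R(x,x) = 0`. -/
noncomputable def resMetric {F : Type*} (En : (F → ℝ) → (F → ℝ) → ℝ)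
    (Dom : Set (F → ℝ)) (x y : F) : ℝ :=
  if x = y then 0
  else sSup {r : ℝ | ∃ f ∈ Dom, 0 < En f f ∧ r = (f x - f y) ^ 2 / En f f}

section Aux
variable {F : Type*} {En : (F → ℝ) → (F → ℝ) → ℝ} {Dom : Set (F → ℝ)}
  (h : IsResistanceForm F En Dom)

include h

lemma RFaux.add_right {f g k : F → ℝ} (hf : f ∈ Dom) (hg : g ∈ Dom) (hk : k ∈ Dom) :
    En f (g + k) = En f g + En f k := by
  rw [h.symm hf (h.add_mem hg hk), h.add_left hg hk hf, h.symm hg hf, h.symm hk hf]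

lemma RFaux.smul_right (c : ℝ) {f g : F → ℝ} (hf : f ∈ Dom) (hg : g ∈ Dom) :
    En f (c • g) = c * En f g := by
  rw [h.symm hf (h.smul_mem c hg), h.smul_left c hg hf, h.symm hg hf]

lemma RFaux.neg_mem {f : F → ℝ} (hf : f ∈ Dom) : -f ∈ Dom := by
  have := h.smul_mem (-1) hf; simpa using this

lemma RFaux.sub_mem {f g : F → ℝ} (hf : f ∈ Dom) (hg : g ∈ Dom) : f - g ∈ Dom := by
  have := h.add_mem hf (RFaux.neg_mem h hg); simpa [sub_eq_add_neg] using this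

lemma RFaux.const_energy (c : ℝ) : En (fun _ => c) (fun _ => c) = 0 :=
  (h.eq_zero_iff (h.const_mem c)).mpr ⟨c, rfl⟩

lemma RFaux.en_const_left (c : ℝ) {g : F → ℝ} (hg : g ∈ Dom) :
    En (fun _ => c) g = 0 := by
  set k : F → ℝ := fun _ => c with hk
  have hkm : k ∈ Dom := h.const_mem c
  by_contra hB
  have expand : ∀ t : ℝ, En (g + t • k) (g + t • k) = En g g + 2 * t * En k g := by
    intro t
    have htk : t • k ∈ Dom := h.smul_mem t hkm
    rw [h.add_left hg htk (h.add_mem hg htk),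
      RFaux.add_right h hg hg htk, RFaux.add_right h htk hg htk,
      h.smul_left t hkm hg, RFaux.smul_right h t htk hkm, h.smul_left t hkm hkm,
      RFaux.const_energy h c, RFaux.smul_right h t hg hkm, h.symm hg hkm]
    ring
  have hpos := h.nonneg (h.add_mem hg (h.smul_mem (-(En g g + 1) / (2 * En k g)) hkm))
  rw [expand] at hpos
  have heq : 2 * (-(En g g + 1) / (2 * En k g)) * En k g = -(En g g + 1) := by
    field_simp
  rw [heq] at hpos
  linarith

lemma RFaux.add_const_energy (c : ℝ) {g : F → ℝ} (hg : g ∈ Dom) :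
    En (g + fun _ => c) (g + fun _ => c) = En g g := by
  set k : F → ℝ := fun _ => c with hk
  have hkm : k ∈ Dom := h.const_mem c
  rw [h.add_left hg hkm (h.add_mem hg hkm), RFaux.add_right h hg hg hkm,
    RFaux.add_right h hkm hg hkm, RFaux.const_energy h c,
    h.symm hg hkm, RFaux.en_const_left h c hg]
  ring

lemma RFaux.smul_energy (t : ℝ) {g : F → ℝ} (hg : g ∈ Dom) :
    En (t • g) (t • g) = t ^ 2 * En g g := by
  rw [h.smul_left t hg (h.smul_mem t hg), RFaux.smul_right h t hg hg]; ring

lemma RFaux.sep_pos {p q : F} (hne : p ≠ q) :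
    ∃ f ∈ Dom, 0 < En f f ∧ f p ≠ f q := by
  obtain ⟨f, hf, hfpq⟩ := h.separates hne
  refine ⟨f, hf, ?_, hfpq⟩
  rcases lt_or_eq_of_le (h.nonneg hf) with hlt | heq
  · exact hlt
  · exfalso
    obtain ⟨c, rfl⟩ := (h.eq_zero_iff hf).mp heq.symm
    exact hfpq rfl

lemma RFaux.set_nonempty {p q : F} (hne : p ≠ q) :
    {r : ℝ | ∃ f ∈ Dom, 0 < En f f ∧ r = (f p - f q) ^ 2 / En f f}.Nonempty := by
  obtain ⟨f, hf, hE, _⟩ := RFaux.sep_pos h hne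
  exact ⟨_, f, hf, hE, rfl⟩

lemma RFaux.resMetric_nonneg (p q : F) : 0 ≤ resMetric En Dom p q := by
  unfold resMetric
  split
  · exact le_refl 0
  · next hne =>
    obtain ⟨f, hf, hE, _⟩ := RFaux.sep_pos h hne
    refine le_trans (div_nonneg (sq_nonneg (f p - f q)) (h.nonneg hf)) ?_
    exact le_csSup (h.bddAbove p q) ⟨f, hf, hE, rfl⟩

lemma RFaux.sq_sub_le (p q : F) {f : F → ℝ} (hf : f ∈ Dom) :
    (f p - f q) ^ 2 ≤ resMetric En Dom p q * En f f := by
  by_cases hpq : p = q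
  · subst hpq; simp [resMetric]
  by_cases hE : En f f = 0
  · obtain ⟨c, rfl⟩ := (h.eq_zero_iff hf).mp hE
    simp [hE]
  · have hEpos : 0 < En f f := lt_of_le_of_ne (h.nonneg hf) (Ne.symm hE)
    have : (f p - f q) ^ 2 / En f f ≤ resMetric En Dom p q := by
      rw [resMetric, if_neg hpq]
      exact le_csSup (h.bddAbove p q) ⟨f, hf, hEpos, rfl⟩
    calc (f p - f q) ^ 2 = (f p - f q) ^ 2 / En f f * En f f := by field_simp
      _ ≤ resMetric En Dom p q * En f f := by
          exact mul_le_mul_of_nonneg_right this hEpos.le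

end Aux

section ExtDef
variable {F : Type*}

/-- Extend a function on `S` to `F` by the constant value at `z` off `S`. -/
noncomputable def RFext {S : Set F} {z : F} (hz : z ∈ S) (f : ↥S → ℝ) : F → ℝ :=
  fun x => if hx : x ∈ S then f ⟨x, hx⟩ else f ⟨z, hz⟩

lemma RFext_apply_mem {S : Set F} {z : F} (hz : z ∈ S) (f : ↥S → ℝ) {x : F}
    (hx : x ∈ S) : RFext hz f x = f ⟨x, hx⟩ := dif_pos hx

lemma RFext_apply_not_mem {S : Set F} {z : F} (hz : z ∈ S) (f : ↥S → ℝ) {x : F}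
    (hx : x ∉ S) : RFext hz f x = f ⟨z, hz⟩ := dif_neg hx

lemma RFext_restrict_self {S : Set F} {z : F} (hz : z ∈ S) (f : ↥S → ℝ) :
    S.restrict (RFext hz f) = f := by
  funext p
  exact dif_pos p.2

lemma RFext_restrict_other {S T : Set F} {z : F} (hz : z ∈ S)
    (hcut : ∀ x, x ∈ S → x ∈ T → x = z) (f : ↥S → ℝ) :
    T.restrict (RFext hz f) = fun _ => f ⟨z, hz⟩ := by
  funext p
  show RFext hz f p.1 = _
  by_cases hp : p.1 ∈ S
  · have hzp := hcut p.1 hp p.2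
    rw [RFext_apply_mem hz f hp]
    congr 1
    exact Subtype.ext hzp
  · exact dif_neg hp

end ExtDef

set_option maxHeartbeats 1000000 in
/-- Gluing two resistance forms at a single common point `z` (`F₁ ∩ F₂ = {z}`,
`F₁ ∪ F₂ = F`): the sum form on `{f : f|_{F₁} ∈ Dom₁, f|_{F₂} ∈ Dom₂}` is a resistance form
on `F₁ ∪ F₂`, its resistance metric restricts to the metrics of the pieces, and resistances
across the cut point add up. -/
theorem resistance_form_glue_cut_point {F : Type*} (S₁ S₂ : Set F) (z : F)
    (hz1 : z ∈ S₁) (hz2 : z ∈ S₂)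
    (hUnion : S₁ ∪ S₂ = Set.univ) (hInter : S₁ ∩ S₂ = {z})
    (En₁ : (↥S₁ → ℝ) → (↥S₁ → ℝ) → ℝ) (Dom₁ : Set (↥S₁ → ℝ))
    (En₂ : (↥S₂ → ℝ) → (↥S₂ → ℝ) → ℝ) (Dom₂ : Set (↥S₂ → ℝ))
    (h₁ : IsResistanceForm ↥S₁ En₁ Dom₁)
    (h₂ : IsResistanceForm ↥S₂ En₂ Dom₂)
    (En : (F → ℝ) → (F → ℝ) → ℝ) (Dom : Set (F → ℝ))
    (hDom : Dom = {f : F → ℝ | S₁.restrict f ∈ Dom₁ ∧ S₂.restrict f ∈ Dom₂})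
    (hEn : ∀ f g : F → ℝ,
      En f g = En₁ (S₁.restrict f) (S₁.restrict g) + En₂ (S₂.restrict f) (S₂.restrict g)) :
    IsResistanceForm F En Dom ∧
    (∀ (x y : F) (hx : x ∈ S₁) (hy : y ∈ S₁),
      resMetric En Dom x y = resMetric En₁ Dom₁ ⟨x, hx⟩ ⟨y, hy⟩) ∧
    (∀ (x y : F) (hx : x ∈ S₂) (hy : y ∈ S₂),
      resMetric En Dom x y = resMetric En₂ Dom₂ ⟨x, hx⟩ ⟨y, hy⟩) ∧
    (∀ (x y : F) (hx : x ∈ S₁) (hy : y ∈ S₂),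
      resMetric En Dom x y =
        resMetric En₁ Dom₁ ⟨x, hx⟩ ⟨z, hz1⟩ + resMetric En₂ Dom₂ ⟨z, hz2⟩ ⟨y, hy⟩) := by
  -- basic set helpers
  have hmem2 : ∀ x : F, x ∉ S₁ → x ∈ S₂ := by
    intro x hx
    have hxu : x ∈ S₁ ∪ S₂ := by rw [hUnion]; exact Set.mem_univ x
    exact hxu.resolve_left hx
  have hmem1 : ∀ x : F, x ∉ S₂ → x ∈ S₁ := by
    intro x hx
    have hxu : x ∈ S₁ ∪ S₂ := by rw [hUnion]; exact Set.mem_univ x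
    exact hxu.resolve_right hx
  have heqz : ∀ x : F, x ∈ S₁ → x ∈ S₂ → x = z := by
    intro x hx1 hx2
    have : x ∈ S₁ ∩ S₂ := ⟨hx1, hx2⟩
    rw [hInter] at this
    exact this
  have heqz' : ∀ x : F, x ∈ S₂ → x ∈ S₁ → x = z := fun x a b => heqz x b a
  subst hDom
  -- membership characterizations
  have memD : ∀ {f : F → ℝ},
      f ∈ {f : F → ℝ | S₁.restrict f ∈ Dom₁ ∧ S₂.restrict f ∈ Dom₂} ↔
      S₁.restrict f ∈ Dom₁ ∧ S₂.restrict f ∈ Dom₂ := Iff.rfl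
  -- extension lemmas
  have ext1_mem : ∀ {f₁ : ↥S₁ → ℝ}, f₁ ∈ Dom₁ →
      RFext hz1 f₁ ∈ {f : F → ℝ | S₁.restrict f ∈ Dom₁ ∧ S₂.restrict f ∈ Dom₂} := by
    intro f₁ hf₁
    refine ⟨?_, ?_⟩
    · rw [RFext_restrict_self]; exact hf₁
    · rw [RFext_restrict_other hz1 heqz f₁]; exact h₂.const_mem _
  have ext2_mem : ∀ {f₂ : ↥S₂ → ℝ}, f₂ ∈ Dom₂ →
      RFext hz2 f₂ ∈ {f : F → ℝ | S₁.restrict f ∈ Dom₁ ∧ S₂.restrict f ∈ Dom₂} := by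
    intro f₂ hf₂
    refine ⟨?_, ?_⟩
    · rw [RFext_restrict_other hz2 heqz' f₂]; exact h₁.const_mem _
    · rw [RFext_restrict_self]; exact hf₂
  have ext1_energy : ∀ {f₁ : ↥S₁ → ℝ}, f₁ ∈ Dom₁ →
      En (RFext hz1 f₁) (RFext hz1 f₁) = En₁ f₁ f₁ := by
    intro f₁ hf₁
    rw [hEn, RFext_restrict_self, RFext_restrict_other hz1 heqz f₁,
      RFaux.const_energy h₂, add_zero]
  have ext2_energy : ∀ {f₂ : ↥S₂ → ℝ}, f₂ ∈ Dom₂ →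
      En (RFext hz2 f₂) (RFext hz2 f₂) = En₂ f₂ f₂ := by
    intro f₂ hf₂
    rw [hEn, RFext_restrict_self, RFext_restrict_other hz2 heqz' f₂,
      RFaux.const_energy h₁, zero_add]
  -- the glued form is a resistance form
  have hRF : IsResistanceForm F En {f : F → ℝ | S₁.restrict f ∈ Dom₁ ∧ S₂.restrict f ∈ Dom₂} := by
    constructor
    case nonempty => exact ⟨z⟩
    case const_mem =>
      intro c
      exact ⟨h₁.const_mem c, h₂.const_mem c⟩
    case add_mem =>
      rintro f g ⟨hf1, hf2⟩ ⟨hg1, hg2⟩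
      exact ⟨h₁.add_mem hf1 hg1, h₂.add_mem hf2 hg2⟩
    case smul_mem =>
      rintro c f ⟨hf1, hf2⟩
      exact ⟨h₁.smul_mem c hf1, h₂.smul_mem c hf2⟩
    case symm =>
      rintro f g ⟨hf1, hf2⟩ ⟨hg1, hg2⟩
      rw [hEn, hEn, h₁.symm hf1 hg1, h₂.symm hf2 hg2]
    case add_left =>
      rintro f g k ⟨hf1, hf2⟩ ⟨hg1, hg2⟩ ⟨hk1, hk2⟩
      have e1 : S₁.restrict (f + g) = S₁.restrict f + S₁.restrict g := rfl
      have e2 : S₂.restrict (f + g) = S₂.restrict f + S₂.restrict g := rfl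
      rw [hEn, hEn, hEn, e1, e2, h₁.add_left hf1 hg1 hk1, h₂.add_left hf2 hg2 hk2]
      ring
    case smul_left =>
      rintro c f g ⟨hf1, hf2⟩ ⟨hg1, hg2⟩
      have e1 : S₁.restrict (c • f) = c • S₁.restrict f := rfl
      have e2 : S₂.restrict (c • f) = c • S₂.restrict f := rfl
      rw [hEn, hEn, e1, e2, h₁.smul_left c hf1 hg1, h₂.smul_left c hf2 hg2]
      ring
    case nonneg =>
      rintro f ⟨hf1, hf2⟩
      rw [hEn]
      exact add_nonneg (h₁.nonneg hf1) (h₂.nonneg hf2)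
    case eq_zero_iff =>
      rintro f ⟨hf1, hf2⟩
      constructor
      · intro h0
        rw [hEn] at h0
        have hn1 := h₁.nonneg hf1
        have hn2 := h₂.nonneg hf2
        have e1 : En₁ (S₁.restrict f) (S₁.restrict f) = 0 := by linarith
        have e2 : En₂ (S₂.restrict f) (S₂.restrict f) = 0 := by linarith
        obtain ⟨c₁, hc₁⟩ := (h₁.eq_zero_iff hf1).mp e1
        obtain ⟨c₂, hc₂⟩ := (h₂.eq_zero_iff hf2).mp e2
        have hz1v : f z = c₁ := congrFun hc₁ ⟨z, hz1⟩
        have hz2v : f z = c₂ := congrFun hc₂ ⟨z, hz2⟩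
        refine ⟨c₁, funext fun x => ?_⟩
        by_cases hx : x ∈ S₁
        · exact congrFun hc₁ ⟨x, hx⟩
        · have := congrFun hc₂ ⟨x, hmem2 x hx⟩
          rw [show (S₂.restrict f) ⟨x, hmem2 x hx⟩ = f x from rfl] at this
          rw [this, ← hz2v, hz1v]
      · rintro ⟨c, rfl⟩
        have e1 : S₁.restrict (fun _ : F => c) = fun _ => c := rfl
        have e2 : S₂.restrict (fun _ : F => c) = fun _ => c := rfl
        rw [hEn, e1, e2, RFaux.const_energy h₁, RFaux.const_energy h₂, add_zero]
    case complete =>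
      intro u hu hcau
      have hu1 : ∀ n, S₁.restrict (u n) ∈ Dom₁ := fun n => (hu n).1
      have hu2 : ∀ n, S₂.restrict (u n) ∈ Dom₂ := fun n => (hu n).2
      have hcau1 : ∀ ε : ℝ, 0 < ε → ∃ N, ∀ m ≥ N, ∀ n ≥ N,
          En₁ (S₁.restrict (u m) - S₁.restrict (u n))
            (S₁.restrict (u m) - S₁.restrict (u n)) < ε := by
        intro ε hε
        obtain ⟨N, hN⟩ := hcau ε hε
        refine ⟨N, fun m hm n hn => ?_⟩
        have := hN m hm n hn
        rw [hEn] at this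
        have e1 : S₁.restrict (u m - u n) = S₁.restrict (u m) - S₁.restrict (u n) := rfl
        have e2 : S₂.restrict (u m - u n) = S₂.restrict (u m) - S₂.restrict (u n) := rfl
        rw [e1, e2] at this
        have hn2 := h₂.nonneg (RFaux.sub_mem h₂ (hu2 m) (hu2 n))
        linarith
      have hcau2 : ∀ ε : ℝ, 0 < ε → ∃ N, ∀ m ≥ N, ∀ n ≥ N,
          En₂ (S₂.restrict (u m) - S₂.restrict (u n))
            (S₂.restrict (u m) - S₂.restrict (u n)) < ε := by
        intro ε hε
        obtain ⟨N, hN⟩ := hcau ε hε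
        refine ⟨N, fun m hm n hn => ?_⟩
        have := hN m hm n hn
        rw [hEn] at this
        have e1 : S₁.restrict (u m - u n) = S₁.restrict (u m) - S₁.restrict (u n) := rfl
        have e2 : S₂.restrict (u m - u n) = S₂.restrict (u m) - S₂.restrict (u n) := rfl
        rw [e1, e2] at this
        have hn1 := h₁.nonneg (RFaux.sub_mem h₁ (hu1 m) (hu1 n))
        linarith
      obtain ⟨g₁, hg₁m, hg₁⟩ := h₁.complete _ hu1 hcau1
      obtain ⟨g₂, hg₂m, hg₂⟩ := h₂.complete _ hu2 hcau2
      set c : ℝ := g₁ ⟨z, hz1⟩ - g₂ ⟨z, hz2⟩ with hc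
      set g : F → ℝ := fun x =>
        if hx : x ∈ S₁ then g₁ ⟨x, hx⟩ else g₂ ⟨x, hmem2 x hx⟩ + c with hg
      have hgr1 : S₁.restrict g = g₁ := by
        funext p
        show (if hx : p.1 ∈ S₁ then g₁ ⟨p.1, hx⟩ else _) = g₁ p
        rw [dif_pos p.2]
      have hgr2 : S₂.restrict g = g₂ + fun _ => c := by
        funext p
        show (if hx : p.1 ∈ S₁ then g₁ ⟨p.1, hx⟩ else g₂ ⟨p.1, _⟩ + c) = g₂ p + c
        by_cases hp : p.1 ∈ S₁
        · rw [dif_pos hp]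
          have hpz := heqz p.1 hp p.2
          have e1 : g₁ ⟨p.1, hp⟩ = g₁ ⟨z, hz1⟩ := by congr 1; exact Subtype.ext hpz
          have e2 : g₂ p = g₂ ⟨z, hz2⟩ := by congr 1; exact Subtype.ext hpz
          rw [e1, e2, hc]; ring
        · exact dif_neg hp
      refine ⟨g, ⟨?_, ?_⟩, ?_⟩
      · rw [hgr1]; exact hg₁m
      · rw [hgr2]; exact h₂.add_mem hg₂m (h₂.const_mem c)
      · intro ε hε
        obtain ⟨N₁, hN₁⟩ := hg₁ (ε / 2) (by linarith)
        obtain ⟨N₂, hN₂⟩ := hg₂ (ε / 2) (by linarith)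
        refine ⟨max N₁ N₂, fun n hn => ?_⟩
        have h1 := hN₁ n (le_trans (le_max_left _ _) hn)
        have h2 := hN₂ n (le_trans (le_max_right _ _) hn)
        rw [hEn]
        have e1 : S₁.restrict (u n - g) = S₁.restrict (u n) - g₁ := by
          rw [show S₁.restrict (u n - g) = S₁.restrict (u n) - S₁.restrict g from rfl, hgr1]
        have e2 : S₂.restrict (u n - g) = (S₂.restrict (u n) - g₂) + fun _ => -c := by
          rw [show S₂.restrict (u n - g) = S₂.restrict (u n) - S₂.restrict g from rfl, hgr2]
          funext p
          simp only [Pi.sub_apply, Pi.add_apply]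
          ring
        rw [e1, e2, RFaux.add_const_energy h₂ (-c) (RFaux.sub_mem h₂ (hu2 n) hg₂m)]
        linarith
    case separates =>
      intro x y hxy
      by_cases hx1 : x ∈ S₁
      · by_cases hy1 : y ∈ S₁
        · have hne : (⟨x, hx1⟩ : ↥S₁) ≠ ⟨y, hy1⟩ := fun hc => hxy (congrArg Subtype.val hc)
          obtain ⟨f₁, hf₁, hval⟩ := h₁.separates hne
          refine ⟨RFext hz1 f₁, ext1_mem hf₁, ?_⟩
          rw [RFext_apply_mem hz1 f₁ hx1, RFext_apply_mem hz1 f₁ hy1]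
          exact hval
        · have hy2 : y ∈ S₂ := hmem2 y hy1
          by_cases hx2 : x ∈ S₂
          · have hne : (⟨x, hx2⟩ : ↥S₂) ≠ ⟨y, hy2⟩ := fun hc => hxy (congrArg Subtype.val hc)
            obtain ⟨f₂, hf₂, hval⟩ := h₂.separates hne
            refine ⟨RFext hz2 f₂, ext2_mem hf₂, ?_⟩
            rw [RFext_apply_mem hz2 f₂ hx2, RFext_apply_mem hz2 f₂ hy2]
            exact hval
          · -- x ∈ S₁ \ S₂, y ∈ S₂ \ S₁, so x ≠ z
            have hxz : x ≠ z := fun hc => hx2 (hc ▸ hz2)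
            have hne : (⟨x, hx1⟩ : ↥S₁) ≠ ⟨z, hz1⟩ := fun hc => hxz (congrArg Subtype.val hc)
            obtain ⟨f₁, hf₁, hval⟩ := h₁.separates hne
            refine ⟨RFext hz1 f₁, ext1_mem hf₁, ?_⟩
            rw [RFext_apply_mem hz1 f₁ hx1, RFext_apply_not_mem hz1 f₁ hy1]
            exact hval
      · have hx2 : x ∈ S₂ := hmem2 x hx1
        by_cases hy1 : y ∈ S₁
        · by_cases hy2 : y ∈ S₂
          · have hne : (⟨x, hx2⟩ : ↥S₂) ≠ ⟨y, hy2⟩ := fun hc => hxy (congrArg Subtype.val hc)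
            obtain ⟨f₂, hf₂, hval⟩ := h₂.separates hne
            refine ⟨RFext hz2 f₂, ext2_mem hf₂, ?_⟩
            rw [RFext_apply_mem hz2 f₂ hx2, RFext_apply_mem hz2 f₂ hy2]
            exact hval
          · have hyz : y ≠ z := fun hc => hy2 (hc ▸ hz2)
            have hne : (⟨y, hy1⟩ : ↥S₁) ≠ ⟨z, hz1⟩ := fun hc => hyz (congrArg Subtype.val hc)
            obtain ⟨f₁, hf₁, hval⟩ := h₁.separates hne
            refine ⟨RFext hz1 f₁, ext1_mem hf₁, ?_⟩
            rw [RFext_apply_mem hz1 f₁ hy1, RFext_apply_not_mem hz1 f₁ hx1]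
            exact fun hc => hval hc.symm
        · have hy2 : y ∈ S₂ := hmem2 y hy1
          have hne : (⟨x, hx2⟩ : ↥S₂) ≠ ⟨y, hy2⟩ := fun hc => hxy (congrArg Subtype.val hc)
          obtain ⟨f₂, hf₂, hval⟩ := h₂.separates hne
          refine ⟨RFext hz2 f₂, ext2_mem hf₂, ?_⟩
          rw [RFext_apply_mem hz2 f₂ hx2, RFext_apply_mem hz2 f₂ hy2]
          exact hval
    case bddAbove =>
      intro x y
      have hkey : ∀ p : F, ∃ C : ℝ, 0 ≤ C ∧ ∀ f : F → ℝ,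
          S₁.restrict f ∈ Dom₁ → S₂.restrict f ∈ Dom₂ → (f p - f z) ^ 2 ≤ C * En f f := by
        intro p
        by_cases hp : p ∈ S₁
        · refine ⟨resMetric En₁ Dom₁ ⟨p, hp⟩ ⟨z, hz1⟩, RFaux.resMetric_nonneg h₁ _ _, ?_⟩
          intro f hf1 hf2
          have hsq := RFaux.sq_sub_le h₁ ⟨p, hp⟩ ⟨z, hz1⟩ hf1
          have ep : S₁.restrict f ⟨p, hp⟩ = f p := rfl
          have ez : S₁.restrict f ⟨z, hz1⟩ = f z := rfl
          rw [ep, ez] at hsq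
          rw [hEn]
          have hn2 := h₂.nonneg hf2
          nlinarith [RFaux.resMetric_nonneg h₁ (⟨p, hp⟩ : ↥S₁) ⟨z, hz1⟩]
        · have hp2 : p ∈ S₂ := hmem2 p hp
          refine ⟨resMetric En₂ Dom₂ ⟨p, hp2⟩ ⟨z, hz2⟩, RFaux.resMetric_nonneg h₂ _ _, ?_⟩
          intro f hf1 hf2
          have hsq := RFaux.sq_sub_le h₂ ⟨p, hp2⟩ ⟨z, hz2⟩ hf2
          have ep : S₂.restrict f ⟨p, hp2⟩ = f p := rfl
          have ez : S₂.restrict f ⟨z, hz2⟩ = f z := rfl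
          rw [ep, ez] at hsq
          rw [hEn]
          have hn1 := h₁.nonneg hf1
          nlinarith [RFaux.resMetric_nonneg h₂ (⟨p, hp2⟩ : ↥S₂) ⟨z, hz2⟩]
      obtain ⟨Cx, hCx0, hCx⟩ := hkey x
      obtain ⟨Cy, hCy0, hCy⟩ := hkey y
      refine ⟨2 * (Cx + Cy), ?_⟩
      rintro r ⟨f, ⟨hf1, hf2⟩, hE, rfl⟩
      rw [div_le_iff₀ hE]
      have h1 := hCx f hf1 hf2
      have h2 := hCy f hf1 hf2
      nlinarith [sq_nonneg ((f x - f z) - (f y - f z)), sq_nonneg ((f x - f z) + (f y - f z))]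
    case markov =>
      rintro f ⟨hf1, hf2⟩
      have e1 : S₁.restrict (fun t => min (max (f t) 0) 1)
          = fun s => min (max (S₁.restrict f s) 0) 1 := rfl
      have e2 : S₂.restrict (fun t => min (max (f t) 0) 1)
          = fun s => min (max (S₂.restrict f s) 0) 1 := rfl
      refine ⟨⟨?_, ?_⟩, ?_⟩
      · rw [e1]; exact (h₁.markov hf1).1
      · rw [e2]; exact (h₂.markov hf2).1
      · rw [hEn, hEn, e1, e2]
        exact add_le_add (h₁.markov hf1).2 (h₂.markov hf2).2
  -- identity on the first piece
  have key1 : ∀ (x y : F) (hx : x ∈ S₁) (hy : y ∈ S₁),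
      resMetric En {f : F → ℝ | S₁.restrict f ∈ Dom₁ ∧ S₂.restrict f ∈ Dom₂} x y =
        resMetric En₁ Dom₁ ⟨x, hx⟩ ⟨y, hy⟩ := by
    intro x y hx hy
    by_cases hxy : x = y
    · subst hxy
      simp [resMetric]
    · have hxy' : (⟨x, hx⟩ : ↥S₁) ≠ ⟨y, hy⟩ := fun hc => hxy (congrArg Subtype.val hc)
      have hR10 : 0 ≤ resMetric En₁ Dom₁ ⟨x, hx⟩ ⟨y, hy⟩ := RFaux.resMetric_nonneg h₁ _ _
      rw [resMetric, if_neg hxy'] at hR10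
      rw [resMetric, if_neg hxy, resMetric, if_neg hxy']
      apply le_antisymm
      · apply csSup_le (RFaux.set_nonempty hRF hxy)
        rintro r ⟨f, ⟨hf1, hf2⟩, hE, rfl⟩
        rw [div_le_iff₀ hE]
        have hsq := RFaux.sq_sub_le h₁ ⟨x, hx⟩ ⟨y, hy⟩ hf1
        rw [resMetric, if_neg hxy'] at hsq
        have ex : S₁.restrict f ⟨x, hx⟩ = f x := rfl
        have ey : S₁.restrict f ⟨y, hy⟩ = f y := rfl
        rw [ex, ey] at hsq
        rw [hEn]
        have hn2 := h₂.nonneg hf2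
        nlinarith
      · apply csSup_le (RFaux.set_nonempty h₁ hxy')
        rintro r ⟨f₁, hf₁, hE₁, rfl⟩
        apply le_csSup (hRF.bddAbove x y)
        refine ⟨RFext hz1 f₁, ext1_mem hf₁, ?_, ?_⟩
        · rw [ext1_energy hf₁]; exact hE₁
        · rw [ext1_energy hf₁, RFext_apply_mem hz1 f₁ hx, RFext_apply_mem hz1 f₁ hy]
  -- identity on the second piece
  have key2 : ∀ (x y : F) (hx : x ∈ S₂) (hy : y ∈ S₂),
      resMetric En {f : F → ℝ | S₁.restrict f ∈ Dom₁ ∧ S₂.restrict f ∈ Dom₂} x y =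
        resMetric En₂ Dom₂ ⟨x, hx⟩ ⟨y, hy⟩ := by
    intro x y hx hy
    by_cases hxy : x = y
    · subst hxy
      simp [resMetric]
    · have hxy' : (⟨x, hx⟩ : ↥S₂) ≠ ⟨y, hy⟩ := fun hc => hxy (congrArg Subtype.val hc)
      have hR20 : 0 ≤ resMetric En₂ Dom₂ ⟨x, hx⟩ ⟨y, hy⟩ := RFaux.resMetric_nonneg h₂ _ _
      rw [resMetric, if_neg hxy'] at hR20
      rw [resMetric, if_neg hxy, resMetric, if_neg hxy']
      apply le_antisymm
      · apply csSup_le (RFaux.set_nonempty hRF hxy)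
        rintro r ⟨f, ⟨hf1, hf2⟩, hE, rfl⟩
        rw [div_le_iff₀ hE]
        have hsq := RFaux.sq_sub_le h₂ ⟨x, hx⟩ ⟨y, hy⟩ hf2
        rw [resMetric, if_neg hxy'] at hsq
        have ex : S₂.restrict f ⟨x, hx⟩ = f x := rfl
        have ey : S₂.restrict f ⟨y, hy⟩ = f y := rfl
        rw [ex, ey] at hsq
        rw [hEn]
        have hn1 := h₁.nonneg hf1
        nlinarith
      · apply csSup_le (RFaux.set_nonempty h₂ hxy')
        rintro r ⟨f₂, hf₂, hE₂, rfl⟩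
        apply le_csSup (hRF.bddAbove x y)
        refine ⟨RFext hz2 f₂, ext2_mem hf₂, ?_, ?_⟩
        · rw [ext2_energy hf₂]; exact hE₂
        · rw [ext2_energy hf₂, RFext_apply_mem hz2 f₂ hx, RFext_apply_mem hz2 f₂ hy]
  -- additivity across the cut point
  have key3 : ∀ (x y : F) (hx : x ∈ S₁) (hy : y ∈ S₂),
      resMetric En {f : F → ℝ | S₁.restrict f ∈ Dom₁ ∧ S₂.restrict f ∈ Dom₂} x y =
        resMetric En₁ Dom₁ ⟨x, hx⟩ ⟨z, hz1⟩ + resMetric En₂ Dom₂ ⟨z, hz2⟩ ⟨y, hy⟩ := by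
    intro x y hx hy
    by_cases hxz : x = z
    · subst hxz
      have e0 : resMetric En₁ Dom₁ ⟨x, hx⟩ ⟨x, hz1⟩ = 0 := by
        rw [resMetric, if_pos rfl]
      rw [e0, zero_add, key2 x y hz2 hy]
    · by_cases hyz : y = z
      · subst hyz
        have e0 : resMetric En₂ Dom₂ ⟨y, hz2⟩ ⟨y, hy⟩ = 0 := by
          rw [resMetric, if_pos rfl]
        rw [e0, add_zero, key1 x y hx hz1]
      · have hy1 : y ∉ S₁ := fun hy1 => hyz (heqz y hy1 hy)
        have hx2 : x ∉ S₂ := fun hx2 => hxz (heqz x hx hx2)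
        have hxy : x ≠ y := fun hc => hx2 (hc ▸ hy)
        have hxz' : (⟨x, hx⟩ : ↥S₁) ≠ ⟨z, hz1⟩ := fun hc => hxz (congrArg Subtype.val hc)
        have hyz' : (⟨z, hz2⟩ : ↥S₂) ≠ ⟨y, hy⟩ := fun hc => hyz (congrArg Subtype.val hc).symm
        have hR10 : 0 ≤ resMetric En₁ Dom₁ ⟨x, hx⟩ ⟨z, hz1⟩ := RFaux.resMetric_nonneg h₁ _ _
        have hR20 : 0 ≤ resMetric En₂ Dom₂ ⟨z, hz2⟩ ⟨y, hy⟩ := RFaux.resMetric_nonneg h₂ _ _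
        have hA0 : 0 ≤ resMetric En
            {f : F → ℝ | S₁.restrict f ∈ Dom₁ ∧ S₂.restrict f ∈ Dom₂} x y :=
          RFaux.resMetric_nonneg hRF x y
        rw [resMetric, if_neg hxz'] at hR10
        rw [resMetric, if_neg hyz'] at hR20
        rw [resMetric, if_neg hxy] at hA0
        rw [resMetric, if_neg hxy, resMetric, if_neg hxz', resMetric, if_neg hyz']
        apply le_antisymm
        · apply csSup_le (RFaux.set_nonempty hRF hxy)
          rintro r ⟨f, ⟨hf1, hf2⟩, hE, rfl⟩
          rw [div_le_iff₀ hE, hEn]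
          have hE₁0 := h₁.nonneg hf1
          have hE₂0 := h₂.nonneg hf2
          have ha : (f x - f z) ^ 2 ≤
              sSup {r : ℝ | ∃ f ∈ Dom₁, 0 < En₁ f f ∧
                r = (f ⟨x, hx⟩ - f ⟨z, hz1⟩) ^ 2 / En₁ f f} *
                En₁ (S₁.restrict f) (S₁.restrict f) := by
            have hsq := RFaux.sq_sub_le h₁ ⟨x, hx⟩ ⟨z, hz1⟩ hf1
            rw [resMetric, if_neg hxz'] at hsq
            exact hsq
          have hb : (f z - f y) ^ 2 ≤
              sSup {r : ℝ | ∃ f ∈ Dom₂, 0 < En₂ f f ∧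
                r = (f ⟨z, hz2⟩ - f ⟨y, hy⟩) ^ 2 / En₂ f f} *
                En₂ (S₂.restrict f) (S₂.restrict f) := by
            have hsq := RFaux.sq_sub_le h₂ ⟨z, hz2⟩ ⟨y, hy⟩ hf2
            rw [resMetric, if_neg hyz'] at hsq
            exact hsq
          by_cases hE₁z : En₁ (S₁.restrict f) (S₁.restrict f) = 0
          · have hfxz : f x = f z := by
              obtain ⟨c, hc⟩ := (h₁.eq_zero_iff hf1).mp hE₁z
              have e1 : f x = c := congrFun hc ⟨x, hx⟩
              have e2 : f z = c := congrFun hc ⟨z, hz1⟩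
              rw [e1, e2]
            rw [hfxz]
            nlinarith [mul_nonneg hR10 hE₂0, mul_nonneg hR20 hE₁0, mul_nonneg hR10 hE₁0]
          · by_cases hE₂z : En₂ (S₂.restrict f) (S₂.restrict f) = 0
            · have hfzy : f z = f y := by
                obtain ⟨c, hc⟩ := (h₂.eq_zero_iff hf2).mp hE₂z
                have e1 : f z = c := congrFun hc ⟨z, hz2⟩
                have e2 : f y = c := congrFun hc ⟨y, hy⟩
                rw [e1, e2]
              rw [show f x - f y = f x - f z by rw [hfzy]]
              nlinarith [mul_nonneg hR10 hE₂0, mul_nonneg hR20 hE₂0, mul_nonneg hR20 hE₁0]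
            · have hE₁p : 0 < En₁ (S₁.restrict f) (S₁.restrict f) :=
                lt_of_le_of_ne hE₁0 (Ne.symm hE₁z)
              have hE₂p : 0 < En₂ (S₂.restrict f) (S₂.restrict f) :=
                lt_of_le_of_ne hE₂0 (Ne.symm hE₂z)
              have hprod : 0 < En₁ (S₁.restrict f) (S₁.restrict f) *
                  En₂ (S₂.restrict f) (S₂.restrict f) := mul_pos hE₁p hE₂p
              have hkey : (f x - f y) ^ 2 *
                  (En₁ (S₁.restrict f) (S₁.restrict f) * En₂ (S₂.restrict f) (S₂.restrict f)) ≤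
                  ((f x - f z) ^ 2 * En₂ (S₂.restrict f) (S₂.restrict f) +
                    (f z - f y) ^ 2 * En₁ (S₁.restrict f) (S₁.restrict f)) *
                  (En₁ (S₁.restrict f) (S₁.restrict f) + En₂ (S₂.restrict f) (S₂.restrict f)) := by
                nlinarith [sq_nonneg ((f x - f z) * En₂ (S₂.restrict f) (S₂.restrict f) -
                  (f z - f y) * En₁ (S₁.restrict f) (S₁.restrict f))]
              have hmid : (f x - f z) ^ 2 * En₂ (S₂.restrict f) (S₂.restrict f) +
                  (f z - f y) ^ 2 * En₁ (S₁.restrict f) (S₁.restrict f) ≤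
                  (sSup {r : ℝ | ∃ f ∈ Dom₁, 0 < En₁ f f ∧
                    r = (f ⟨x, hx⟩ - f ⟨z, hz1⟩) ^ 2 / En₁ f f} +
                   sSup {r : ℝ | ∃ f ∈ Dom₂, 0 < En₂ f f ∧
                    r = (f ⟨z, hz2⟩ - f ⟨y, hy⟩) ^ 2 / En₂ f f}) *
                  (En₁ (S₁.restrict f) (S₁.restrict f) * En₂ (S₂.restrict f) (S₂.restrict f)) := by
                nlinarith [mul_le_mul_of_nonneg_right ha hE₂0,
                  mul_le_mul_of_nonneg_right hb hE₁0]
              have hmid2 := mul_le_mul_of_nonneg_right hmid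
                (add_nonneg hE₁0 hE₂0)
              refine le_of_mul_le_mul_right ?_ hprod
              nlinarith [hkey, hmid2]
        · apply le_of_forall_pos_le_add
          intro ε hε
          obtain ⟨r₁, hr₁A, hr₁gt⟩ := exists_lt_of_lt_csSup (RFaux.set_nonempty h₁ hxz')
            (sub_lt_self _ (half_pos hε))
          obtain ⟨r₂, hr₂A, hr₂gt⟩ := exists_lt_of_lt_csSup (RFaux.set_nonempty h₂ hyz')
            (sub_lt_self _ (half_pos hε))
          obtain ⟨f₁, hf₁, hE₁p, hr₁⟩ := hr₁A
          obtain ⟨f₂, hf₂, hE₂p, hr₂⟩ := hr₂A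
          set a : ℝ := f₁ ⟨x, hx⟩ - f₁ ⟨z, hz1⟩ with hadef
          set b : ℝ := f₂ ⟨z, hz2⟩ - f₂ ⟨y, hy⟩ with hbdef
          set E₁ : ℝ := En₁ f₁ f₁ with hE₁def
          set E₂ : ℝ := En₂ f₂ f₂ with hE₂def
          set s : ℝ := a / E₁ with hsdef
          set t : ℝ := b / E₂ with htdef
          set g : F → ℝ := s • RFext hz1 f₁ + t • RFext hz2 f₂ with hgdef
          have hE₁ne : E₁ ≠ 0 := ne_of_gt hE₁p
          have hE₂ne : E₂ ≠ 0 := ne_of_gt hE₂p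
          have hgr1 : S₁.restrict g = s • f₁ + fun _ => t * f₂ ⟨z, hz2⟩ := by
            funext p
            obtain ⟨p, hp⟩ := p
            show s * RFext hz1 f₁ p + t * RFext hz2 f₂ p = s * f₁ ⟨p, hp⟩ + t * f₂ ⟨z, hz2⟩
            rw [RFext_apply_mem hz1 f₁ hp,
              show RFext hz2 f₂ p = f₂ ⟨z, hz2⟩ from
                congrFun (RFext_restrict_other hz2 heqz' f₂) ⟨p, hp⟩]
          have hgr2 : S₂.restrict g = t • f₂ + fun _ => s * f₁ ⟨z, hz1⟩ := by
            funext p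
            obtain ⟨p, hp⟩ := p
            show s * RFext hz1 f₁ p + t * RFext hz2 f₂ p = t * f₂ ⟨p, hp⟩ + s * f₁ ⟨z, hz1⟩
            rw [RFext_apply_mem hz2 f₂ hp,
              show RFext hz1 f₁ p = f₁ ⟨z, hz1⟩ from
                congrFun (RFext_restrict_other hz1 heqz f₁) ⟨p, hp⟩]
            ring
          have hgmem : g ∈ {f : F → ℝ | S₁.restrict f ∈ Dom₁ ∧ S₂.restrict f ∈ Dom₂} := by
            constructor
            · rw [hgr1]
              exact h₁.add_mem (h₁.smul_mem s hf₁) (h₁.const_mem _)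
            · rw [hgr2]
              exact h₂.add_mem (h₂.smul_mem t hf₂) (h₂.const_mem _)
          have hgE : En g g = a ^ 2 / E₁ + b ^ 2 / E₂ := by
            rw [hEn, hgr1, hgr2,
              RFaux.add_const_energy h₁ _ (h₁.smul_mem s hf₁),
              RFaux.add_const_energy h₂ _ (h₂.smul_mem t hf₂),
              RFaux.smul_energy h₁ s hf₁, RFaux.smul_energy h₂ t hf₂,
              hsdef, htdef]
            field_simp
            rw [← hE₁def, ← hE₂def]
            ring
          have hgx : g x = s * f₁ ⟨x, hx⟩ + t * f₂ ⟨z, hz2⟩ := by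
            show s * RFext hz1 f₁ x + t * RFext hz2 f₂ x = _
            rw [RFext_apply_mem hz1 f₁ hx, RFext_apply_not_mem hz2 f₂ hx2]
          have hgy : g y = s * f₁ ⟨z, hz1⟩ + t * f₂ ⟨y, hy⟩ := by
            show s * RFext hz1 f₁ y + t * RFext hz2 f₂ y = _
            rw [RFext_apply_not_mem hz1 f₁ hy1, RFext_apply_mem hz2 f₂ hy]
          have hval : g x - g y = a ^ 2 / E₁ + b ^ 2 / E₂ := by
            rw [hgx, hgy, hsdef, htdef, hadef, hbdef]
            field_simp
            ring
          have hρ0 : 0 ≤ a ^ 2 / E₁ + b ^ 2 / E₂ :=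
            add_nonneg (div_nonneg (sq_nonneg a) hE₁p.le) (div_nonneg (sq_nonneg b) hE₂p.le)
          have hr₁' : r₁ = a ^ 2 / E₁ := hr₁
          have hr₂' : r₂ = b ^ 2 / E₂ := hr₂
          clear_value a b E₁ E₂ s t g
          rcases eq_or_lt_of_le hρ0 with hρz | hρp
          · have h1 : 0 ≤ a ^ 2 / E₁ := div_nonneg (sq_nonneg a) hE₁p.le
            have h2 : 0 ≤ b ^ 2 / E₂ := div_nonneg (sq_nonneg b) hE₂p.le
            linarith
          · have hmemA : a ^ 2 / E₁ + b ^ 2 / E₂ ∈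
                {r : ℝ | ∃ f ∈ {f : F → ℝ | S₁.restrict f ∈ Dom₁ ∧ S₂.restrict f ∈ Dom₂},
                  0 < En f f ∧ r = (f x - f y) ^ 2 / En f f} := by
              refine ⟨g, hgmem, ?_, ?_⟩
              · rw [hgE]; exact hρp
              · rw [hval, hgE, eq_div_iff (ne_of_gt hρp)]
                ring
            have hle := le_csSup (hRF.bddAbove x y) hmemA
            have hfin : r₁ + r₂ ≤ sSup {r : ℝ | ∃ f ∈
                {f : F → ℝ | S₁.restrict f ∈ Dom₁ ∧ S₂.restrict f ∈ Dom₂},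
                0 < En f f ∧ r = (f x - f y) ^ 2 / En f f} := by
              rw [hr₁', hr₂']; exact hle
            have h1 : sSup {r : ℝ | ∃ f ∈ Dom₁, 0 < En₁ f f ∧
                r = (f ⟨x, hx⟩ - f ⟨z, hz1⟩) ^ 2 / En₁ f f} ≤ r₁ + ε / 2 := by
              linarith only [hr₁gt]
            have h2 : sSup {r : ℝ | ∃ f ∈ Dom₂, 0 < En₂ f f ∧
                r = (f ⟨z, hz2⟩ - f ⟨y, hy⟩) ^ 2 / En₂ f f} ≤ r₂ + ε / 2 := by
              linarith only [hr₂gt]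
            refine le_trans (add_le_add h1 h2) ?_
            have he : (r₁ + ε / 2) + (r₂ + ε / 2) = (r₁ + r₂) + ε := by ring
            rw [he]
            exact add_le_add_left hfin ε
  exact ⟨hRF, key1, key2, key3⟩
end

section
/- Let F₁, F₂ be two nonempty sets such that F₁ ∩ F₂ is a nonempty finite set. For i = 1, 2, let (E_i, 𝓕_i) be a resistance form on F_i. Define 𝓕 = {f : F₁ ∪ F₂ → ℝ : f|_{F₁} ∈ 𝓕₁ and f|_{F₂} ∈ 𝓕₂} and E(f,f) = E₁(f|_{F₁}, f|_{F₁}) + E₂(f|_{F₂}, f|_{F₂}). Then (E, 𝓕) is a resistance form on F₁ ∪ F₂. -/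
open scoped Classical

namespace IsResistanceForm

variable {G : Type*} {En : (G → ℝ) → (G → ℝ) → ℝ} {Dom : Set (G → ℝ)}

theorem sub_mem (h : IsResistanceForm G En Dom) {f g : G → ℝ} (hf : f ∈ Dom) (hg : g ∈ Dom) :
    f - g ∈ Dom := by
  have : f - g = f + (-1 : ℝ) • g := by funext t; simp; ring
  rw [this]
  exact h.add_mem hf (h.smul_mem (-1) hg)

theorem zero_mem (h : IsResistanceForm G En Dom) : (0 : G → ℝ) ∈ Dom := h.const_mem 0

theorem expand (h : IsResistanceForm G En Dom) {f g : G → ℝ} (hf : f ∈ Dom) (hg : g ∈ Dom)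
    (c : ℝ) : En (f + c • g) (f + c • g) = En f f + 2 * c * En f g + c ^ 2 * En g g := by
  have hcg := h.smul_mem c hg
  have hsum := h.add_mem hf hcg
  rw [h.add_left hf hcg hsum, h.symm hf hsum, h.symm hcg hsum,
    h.add_left hf hcg hf, h.add_left hf hcg hcg,
    h.smul_left c hg hf, h.symm hf hcg, h.smul_left c hg hf,
    h.smul_left c hg hcg, h.symm hg hcg, h.smul_left c hg hg, h.symm hg hf]
  ring

theorem orth (h : IsResistanceForm G En Dom) {f g : G → ℝ} (hf : f ∈ Dom) (hg : g ∈ Dom)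
    (hg0 : En g g = 0) : En f g = 0 := by
  by_contra hne
  set t : ℝ := -(En f f + 1) / (2 * En f g) with ht
  have h1 : 0 ≤ En (f + t • g) (f + t • g) := h.nonneg (h.add_mem hf (h.smul_mem t hg))
  rw [h.expand hf hg t, hg0] at h1
  have h2 : 2 * t * En f g = -(En f f + 1) := by
    rw [ht]; field_simp
  nlinarith

theorem const_energy (h : IsResistanceForm G En Dom) (c : ℝ) :
    En (fun _ => c) (fun _ => c) = 0 :=
  (h.eq_zero_iff (h.const_mem c)).mpr ⟨c, rfl⟩

theorem add_const (h : IsResistanceForm G En Dom) {f : G → ℝ} (hf : f ∈ Dom) (c : ℝ) :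
    En (f + fun _ => c) (f + fun _ => c) = En f f := by
  have h1 : (f + fun _ => c) = f + c • (fun _ => (1 : ℝ)) := by funext t; simp
  rw [h1, h.expand hf (h.const_mem 1) c,
    h.orth hf (h.const_mem 1) (h.const_energy 1), h.const_energy 1]
  ring

theorem pt_bound (h : IsResistanceForm G En Dom) (x y : G) :
    ∃ M : ℝ, 0 ≤ M ∧ ∀ f ∈ Dom, (f x - f y) ^ 2 ≤ M * En f f := by
  obtain ⟨M₀, hM₀⟩ := h.bddAbove x y
  refine ⟨max M₀ 0, le_max_right _ _, fun f hf => ?_⟩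
  rcases eq_or_lt_of_le (h.nonneg hf) with h0 | h0
  · obtain ⟨c, rfl⟩ := (h.eq_zero_iff hf).mp h0.symm
    rw [← h0, mul_zero]
    simp
  · have hmem : (f x - f y) ^ 2 / En f f ∈
        {r : ℝ | ∃ f ∈ Dom, 0 < En f f ∧ r = (f x - f y) ^ 2 / En f f} :=
      ⟨f, hf, h0, rfl⟩
    have := hM₀ hmem
    rw [div_le_iff₀ h0] at this
    nlinarith [le_max_left M₀ (0:ℝ), h0.le]

theorem posPart_on (h : IsResistanceForm G En Dom) (V : Finset G) {f : G → ℝ} (hf : f ∈ Dom) :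
    ∃ p ∈ Dom, ∀ x ∈ V, p x = max (f x) 0 := by
  set c : ℝ := 1 + ∑ x ∈ V, |f x| with hc
  have hsum : (0:ℝ) ≤ ∑ x ∈ V, |f x| := Finset.sum_nonneg fun x _ => abs_nonneg _
  have hc0 : 0 < c := by rw [hc]; linarith
  have hbd : ∀ x ∈ V, f x ≤ c := by
    intro x hx
    have h1 : |f x| ≤ ∑ y ∈ V, |f y| := Finset.single_le_sum (f := fun y => |f y|) (fun y _ => abs_nonneg _) hx
    have h2 := le_abs_self (f x)
    rw [hc]; linarith
  have hmem := h.markov (h.smul_mem c⁻¹ hf)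
  refine ⟨c • (fun t => min (max ((c⁻¹ • f) t) 0) 1), h.smul_mem c hmem.1, fun x hx => ?_⟩
  have hfx := hbd x hx
  simp only [Pi.smul_apply, smul_eq_mul]
  rcases le_total (f x) 0 with h0 | h0
  · have h1 : c⁻¹ * f x ≤ 0 := mul_nonpos_of_nonneg_of_nonpos (inv_nonneg.mpr hc0.le) h0
    rw [max_eq_right h1, max_eq_right h0, min_eq_left (by norm_num : (0:ℝ) ≤ 1)]
    ring
  · have h1 : 0 ≤ c⁻¹ * f x := mul_nonneg (inv_nonneg.mpr hc0.le) h0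
    have h2 : c⁻¹ * f x ≤ 1 := by
      rw [inv_mul_le_iff₀ hc0]; linarith
    rw [max_eq_left h1, min_eq_left h2, max_eq_left h0]
    field_simp

theorem min_on (h : IsResistanceForm G En Dom) (V : Finset G) {f g : G → ℝ}
    (hf : f ∈ Dom) (hg : g ∈ Dom) : ∃ m ∈ Dom, ∀ x ∈ V, m x = min (f x) (g x) := by
  obtain ⟨p, hp, hpv⟩ := h.posPart_on V (h.sub_mem hf hg)
  refine ⟨f - p, h.sub_mem hf hp, fun x hx => ?_⟩
  have hv := hpv x hx
  simp only [Pi.sub_apply] at hv ⊢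
  rw [hv]
  rcases le_total (f x) (g x) with h0 | h0
  · rw [max_eq_right (by linarith), min_eq_left h0]; ring
  · rw [max_eq_left (by linarith), min_eq_right h0]; ring

theorem indicator_on (h : IsResistanceForm G En Dom) (V : Finset G) (x₀ : G) :
    x₀ ∉ V → ∃ f ∈ Dom, f x₀ = 1 ∧ ∀ y ∈ V, f y = 0 := by
  classical
  induction V using Finset.induction_on with
  | empty => exact fun _ => ⟨fun _ => 1, h.const_mem 1, rfl, by simp⟩
  | @insert a V' ha ih =>
    intro hx₀
    rw [Finset.mem_insert] at hx₀
    push_neg at hx₀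
    obtain ⟨hne, hx₀'⟩ := hx₀
    obtain ⟨f, hfD, hf1, hf0⟩ := ih hx₀'
    obtain ⟨g₀, hg₀D, hgne⟩ := h.separates hne
    set d : ℝ := g₀ x₀ - g₀ a with hd
    have hdne : d ≠ 0 := sub_ne_zero.mpr hgne
    set g : G → ℝ := d⁻¹ • (g₀ - fun _ => g₀ a) with hgdef
    have hgD : g ∈ Dom := h.smul_mem _ (h.sub_mem hg₀D (h.const_mem _))
    have hg1 : g x₀ = 1 := by
      rw [hgdef]; simp only [Pi.smul_apply, Pi.sub_apply, smul_eq_mul]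
      rw [← hd]; exact inv_mul_cancel₀ hdne
    have hga : g a = 0 := by
      rw [hgdef]; simp
    obtain ⟨m, hmD, hmv⟩ := h.min_on (insert x₀ (insert a V')) hfD hgD
    obtain ⟨p, hpD, hpv⟩ := h.posPart_on (insert x₀ (insert a V')) hmD
    refine ⟨p, hpD, ?_, ?_⟩
    · have e1 := hpv x₀ (Finset.mem_insert_self _ _)
      have e2 := hmv x₀ (Finset.mem_insert_self _ _)
      rw [e1, e2, hf1, hg1]; norm_num
    · intro y hy
      have hy' : y ∈ insert x₀ (insert a V') := Finset.mem_insert_of_mem hy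
      have e1 := hpv y hy'
      have e2 := hmv y hy'
      rw [e1, e2]
      rcases Finset.mem_insert.mp hy with rfl | hy2
      · rw [hga]
        exact max_eq_right (min_le_right _ _)
      · rw [hf0 y hy2]
        exact max_eq_right (min_le_left _ _)

theorem sum_mem (h : IsResistanceForm G En Dom) {ι : Type*} (s : Finset ι) (g : ι → G → ℝ)
    (hg : ∀ i ∈ s, g i ∈ Dom) : (∑ i ∈ s, g i) ∈ Dom :=
  Finset.sum_induction g (· ∈ Dom) (fun _ _ ha hb => h.add_mem ha hb) h.zero_mem hg

theorem exists_eq_on (h : IsResistanceForm G En Dom) (V : Finset G) (v : G → ℝ) :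
    ∃ f ∈ Dom, ∀ x ∈ V, f x = v x := by
  classical
  have key : ∀ x : G, ∃ fx, fx ∈ Dom ∧ fx x = 1 ∧ ∀ y ∈ V.erase x, fx y = 0 := by
    intro x
    obtain ⟨f, hf, h1, h0⟩ := h.indicator_on (V.erase x) x (Finset.notMem_erase x V)
    exact ⟨f, hf, h1, h0⟩
  choose χ hχD hχ1 hχ0 using key
  refine ⟨∑ x ∈ V, v x • χ x, h.sum_mem V _ (fun i _ => h.smul_mem _ (hχD i)), fun z hz => ?_⟩
  have e : (∑ x ∈ V, v x • χ x) z = ∑ x ∈ V, v x * χ x z := by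
    rw [Finset.sum_apply]; rfl
  rw [e, Finset.sum_eq_single z]
  · rw [hχ1 z]; ring
  · intro b hb hbz
    rw [hχ0 b z (Finset.mem_erase.mpr ⟨Ne.symm hbz, hz⟩)]; ring
  · intro hz'; exact absurd hz hz'

theorem exists_eq_on' (h : IsResistanceForm G En Dom) {V : Set G} (hV : V.Finite) (v : G → ℝ) :
    ∃ f ∈ Dom, ∀ x ∈ V, f x = v x := by
  obtain ⟨f, hf, he⟩ := h.exists_eq_on hV.toFinset v
  exact ⟨f, hf, fun x hx => he x (hV.mem_toFinset.mpr hx)⟩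

end IsResistanceForm

set_option maxHeartbeats 3200000 in

/-- If `F₁, F₂` are nonempty sets whose intersection is a nonempty finite set and
`(En_i, Dom_i)` are resistance forms on `F_i`, then the sum form with domain
`{f : f|_{F₁} ∈ Dom₁, f|_{F₂} ∈ Dom₂}` is a resistance form on `F₁ ∪ F₂`. -/
theorem resistance_form_glue_finite_intersection {F : Type*} (S₁ S₂ : Set F)
    (hUnion : S₁ ∪ S₂ = Set.univ)
    (hFin : (S₁ ∩ S₂).Finite) (hNe : (S₁ ∩ S₂).Nonempty)
    (En₁ : (↥S₁ → ℝ) → (↥S₁ → ℝ) → ℝ) (Dom₁ : Set (↥S₁ → ℝ))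
    (En₂ : (↥S₂ → ℝ) → (↥S₂ → ℝ) → ℝ) (Dom₂ : Set (↥S₂ → ℝ))
    (h₁ : IsResistanceForm ↥S₁ En₁ Dom₁)
    (h₂ : IsResistanceForm ↥S₂ En₂ Dom₂)
    (En : (F → ℝ) → (F → ℝ) → ℝ) (Dom : Set (F → ℝ))
    (hDom : Dom = {f : F → ℝ | S₁.restrict f ∈ Dom₁ ∧ S₂.restrict f ∈ Dom₂})
    (hEn : ∀ f g : F → ℝ,
      En f g = En₁ (S₁.restrict f) (S₁.restrict g) + En₂ (S₂.restrict f) (S₂.restrict g)) :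
    IsResistanceForm F En Dom := by
  subst hDom
  obtain ⟨x₀, hx₀₁, hx₀₂⟩ := hNe
  have hmem₂ : ∀ x : F, x ∉ S₁ → x ∈ S₂ := by
    intro x hx
    have hx' : x ∈ S₁ ∪ S₂ := by rw [hUnion]; trivial
    exact ((Set.mem_union _ _ _).mp hx').resolve_left hx
  -- restriction algebra (definitional)
  have radd : ∀ (S : Set F) (f g : F → ℝ), S.restrict (f + g) = S.restrict f + S.restrict g :=
    fun _ _ _ => rfl
  have rsub : ∀ (S : Set F) (f g : F → ℝ), S.restrict (f - g) = S.restrict f - S.restrict g :=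
    fun _ _ _ => rfl
  have rsmul : ∀ (S : Set F) (c : ℝ) (f : F → ℝ), S.restrict (c • f) = c • S.restrict f :=
    fun _ _ _ => rfl
  constructor
  -- nonempty
  · exact ⟨x₀⟩
  -- const_mem
  · exact fun c => ⟨h₁.const_mem c, h₂.const_mem c⟩
  -- add_mem
  · exact fun f g hf hg => ⟨h₁.add_mem hf.1 hg.1, h₂.add_mem hf.2 hg.2⟩
  -- smul_mem
  · exact fun c f hf => ⟨h₁.smul_mem c hf.1, h₂.smul_mem c hf.2⟩
  -- symm
  · intro f g hf hg
    rw [hEn, hEn, h₁.symm hf.1 hg.1, h₂.symm hf.2 hg.2]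
  -- add_left
  · intro f g k hf hg hk
    rw [hEn, hEn, hEn, radd, radd, h₁.add_left hf.1 hg.1 hk.1, h₂.add_left hf.2 hg.2 hk.2]
    ring
  -- smul_left
  · intro c f g hf hg
    rw [hEn, hEn, rsmul, rsmul, h₁.smul_left c hf.1 hg.1, h₂.smul_left c hf.2 hg.2]
    ring
  -- nonneg
  · intro f hf
    rw [hEn]
    exact add_nonneg (h₁.nonneg hf.1) (h₂.nonneg hf.2)
  -- eq_zero_iff
  · intro f hf
    rw [hEn]
    constructor
    · intro h0
      have n1 := h₁.nonneg hf.1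
      have n2 := h₂.nonneg hf.2
      have e1 : En₁ (S₁.restrict f) (S₁.restrict f) = 0 := by linarith
      have e2 : En₂ (S₂.restrict f) (S₂.restrict f) = 0 := by linarith
      obtain ⟨c₁, hc₁⟩ := (h₁.eq_zero_iff hf.1).mp e1
      obtain ⟨c₂, hc₂⟩ := (h₂.eq_zero_iff hf.2).mp e2
      have t1 : f x₀ = c₁ := congrFun hc₁ ⟨x₀, hx₀₁⟩
      have t2 : f x₀ = c₂ := congrFun hc₂ ⟨x₀, hx₀₂⟩
      refine ⟨c₁, funext fun x => ?_⟩
      by_cases hx : x ∈ S₁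
      · exact congrFun hc₁ ⟨x, hx⟩
      · rw [show c₁ = c₂ by rw [← t1, t2]]
        exact congrFun hc₂ ⟨x, hmem₂ x hx⟩
    · rintro ⟨c, rfl⟩
      have e1 : S₁.restrict (fun _ => c) = fun _ => c := rfl
      have e2 : S₂.restrict (fun _ => c) = fun _ => c := rfl
      rw [e1, e2, h₁.const_energy c, h₂.const_energy c]
      ring
  -- complete
  · intro u hu hcau
    set u₁ : ℕ → ↥S₁ → ℝ := fun n => S₁.restrict (u n) with hu₁
    set u₂ : ℕ → ↥S₂ → ℝ := fun n => S₂.restrict (u n) with hu₂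
    have hud₁ : ∀ n, u₁ n ∈ Dom₁ := fun n => (hu n).1
    have hud₂ : ∀ n, u₂ n ∈ Dom₂ := fun n => (hu n).2
    have hsub : ∀ m n : ℕ,
        En₁ (u₁ m - u₁ n) (u₁ m - u₁ n) ≤ En (u m - u n) (u m - u n) ∧
        En₂ (u₂ m - u₂ n) (u₂ m - u₂ n) ≤ En (u m - u n) (u m - u n) := by
      intro m n
      rw [hEn, rsub, rsub]
      constructor
      · have := h₂.nonneg (h₂.sub_mem (hud₂ m) (hud₂ n))
        linarith
      · have := h₁.nonneg (h₁.sub_mem (hud₁ m) (hud₁ n))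
        linarith
    obtain ⟨g₁, hg₁D, hg₁⟩ := h₁.complete u₁ hud₁ (by
      intro ε hε
      obtain ⟨N, hN⟩ := hcau ε hε
      exact ⟨N, fun m hm n hn => lt_of_le_of_lt (hsub m n).1 (hN m hm n hn)⟩)
    obtain ⟨g₂, hg₂D, hg₂⟩ := h₂.complete u₂ hud₂ (by
      intro ε hε
      obtain ⟨N, hN⟩ := hcau ε hε
      exact ⟨N, fun m hm n hn => lt_of_le_of_lt (hsub m n).2 (hN m hm n hn)⟩)
    -- agreement of the two limits on the overlap, after normalization at x₀
    have agree : ∀ (y : F) (hy1 : y ∈ S₁) (hy2 : y ∈ S₂),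
        g₁ ⟨y, hy1⟩ - g₁ ⟨x₀, hx₀₁⟩ = g₂ ⟨y, hy2⟩ - g₂ ⟨x₀, hx₀₂⟩ := by
      intro y hy1 hy2
      obtain ⟨M₁, hM₁0, hM₁⟩ := h₁.pt_bound ⟨y, hy1⟩ ⟨x₀, hx₀₁⟩
      obtain ⟨M₂, hM₂0, hM₂⟩ := h₂.pt_bound ⟨y, hy2⟩ ⟨x₀, hx₀₂⟩
      by_contra hne
      set A : ℝ := g₁ ⟨y, hy1⟩ - g₁ ⟨x₀, hx₀₁⟩ with hA
      set B : ℝ := g₂ ⟨y, hy2⟩ - g₂ ⟨x₀, hx₀₂⟩ with hB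
      have hdne : A - B ≠ 0 := sub_ne_zero.mpr hne
      have hd2 : 0 < (A - B) ^ 2 := by positivity
      set δ : ℝ := (A - B) ^ 2 / (4 * (M₁ + M₂ + 1)) with hδdef
      have hδ : 0 < δ := by positivity
      obtain ⟨N₁, hN₁⟩ := hg₁ δ hδ
      obtain ⟨N₂, hN₂⟩ := hg₂ δ hδ
      set n : ℕ := max N₁ N₂ with hn
      have e1 := hN₁ n (le_max_left _ _)
      have e2 := hN₂ n (le_max_right _ _)
      have b1 := hM₁ (u₁ n - g₁) (h₁.sub_mem (hud₁ n) hg₁D)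
      have b2 := hM₂ (u₂ n - g₂) (h₂.sub_mem (hud₂ n) hg₂D)
      simp only [Pi.sub_apply] at b1 b2
      have r1 : u₁ n ⟨y, hy1⟩ = u n y := rfl
      have r2 : u₁ n ⟨x₀, hx₀₁⟩ = u n x₀ := rfl
      have r3 : u₂ n ⟨y, hy2⟩ = u n y := rfl
      have r4 : u₂ n ⟨x₀, hx₀₂⟩ = u n x₀ := rfl
      rw [r1, r2] at b1
      rw [r3, r4] at b2
      set a : ℝ := u n y - u n x₀ with ha
      have c1 : (a - A) ^ 2 ≤ M₁ * δ := by
        have : u n y - g₁ ⟨y, hy1⟩ - (u n x₀ - g₁ ⟨x₀, hx₀₁⟩) = a - A := by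
          rw [ha, hA]; ring
        rw [this] at b1
        have := mul_le_mul_of_nonneg_left e1.le hM₁0
        linarith
      have c2 : (a - B) ^ 2 ≤ M₂ * δ := by
        have : u n y - g₂ ⟨y, hy2⟩ - (u n x₀ - g₂ ⟨x₀, hx₀₂⟩) = a - B := by
          rw [ha, hB]; ring
        rw [this] at b2
        have := mul_le_mul_of_nonneg_left e2.le hM₂0
        linarith
      have step1 : (A - B) ^ 2 ≤ 2 * (M₁ + M₂) * δ := by
        nlinarith [sq_nonneg ((a - A) + (a - B))]
      have hδeq : δ * (4 * (M₁ + M₂ + 1)) = (A - B) ^ 2 := by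
        rw [hδdef]; field_simp
      nlinarith [mul_le_mul_of_nonneg_right step1
          (show (0:ℝ) ≤ 4 * (M₁ + M₂ + 1) by linarith), hδeq, hd2,
        mul_nonneg (show (0:ℝ) ≤ M₁ + M₂ by linarith) hd2.le]
    -- glue the limit
    set g : F → ℝ := fun x => if hx : x ∈ S₁ then g₁ ⟨x, hx⟩ - g₁ ⟨x₀, hx₀₁⟩
      else g₂ ⟨x, hmem₂ x hx⟩ - g₂ ⟨x₀, hx₀₂⟩ with hgdef
    have hgr₁ : S₁.restrict g = g₁ - (fun _ => g₁ ⟨x₀, hx₀₁⟩) := by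
      funext z
      simp only [Set.restrict_apply, hgdef, Pi.sub_apply]
      show dite ((z : F) ∈ S₁) _ _ = _
      rw [dif_pos z.2]
    have hgr₂ : S₂.restrict g = g₂ - (fun _ => g₂ ⟨x₀, hx₀₂⟩) := by
      funext z
      simp only [Set.restrict_apply, hgdef, Pi.sub_apply]
      show dite ((z : F) ∈ S₁) _ _ = _
      by_cases hz : (z : F) ∈ S₁
      · rw [dif_pos hz]
        exact agree z hz z.2
      · rw [dif_neg hz]
    refine ⟨g, ⟨?_, ?_⟩, ?_⟩
    · rw [hgr₁]; exact h₁.sub_mem hg₁D (h₁.const_mem _)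
    · rw [hgr₂]; exact h₂.sub_mem hg₂D (h₂.const_mem _)
    · intro ε hε
      obtain ⟨N₁, hN₁⟩ := hg₁ (ε / 2) (by linarith)
      obtain ⟨N₂, hN₂⟩ := hg₂ (ε / 2) (by linarith)
      refine ⟨max N₁ N₂, fun n hn => ?_⟩
      rw [hEn]
      have r1 : S₁.restrict (u n - g) = (u₁ n - g₁) + (fun _ => g₁ ⟨x₀, hx₀₁⟩) := by
        rw [rsub, hgr₁]
        funext z
        simp only [Pi.sub_apply, Pi.add_apply]
        ring
      have r2 : S₂.restrict (u n - g) = (u₂ n - g₂) + (fun _ => g₂ ⟨x₀, hx₀₂⟩) := by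
        rw [rsub, hgr₂]
        funext z
        simp only [Pi.sub_apply, Pi.add_apply]
        ring
      rw [r1, r2, h₁.add_const (h₁.sub_mem (hud₁ n) hg₁D) _,
        h₂.add_const (h₂.sub_mem (hud₂ n) hg₂D) _]
      have := hN₁ n (le_trans (le_max_left _ _) hn)
      have := hN₂ n (le_trans (le_max_right _ _) hn)
      linarith
  -- separates
  · intro x y hxy
    set v : F → ℝ := fun z => if z = x then 1 else 0 with hv
    have hfin₁ : {z : ↥S₁ | (z : F) ∈ S₂ ∨ (z : F) = x ∨ (z : F) = y}.Finite := by
      have : {z : ↥S₁ | (z : F) ∈ S₂ ∨ (z : F) = x ∨ (z : F) = y} =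
          Subtype.val ⁻¹' ((S₁ ∩ S₂) ∪ {x, y}) := by
        ext z
        simp [z.2]
        tauto
      rw [this]
      exact Set.Finite.preimage Subtype.val_injective.injOn
        (hFin.union ((Set.finite_singleton y).insert x))
    have hfin₂ : {z : ↥S₂ | (z : F) ∈ S₁ ∨ (z : F) = x ∨ (z : F) = y}.Finite := by
      have : {z : ↥S₂ | (z : F) ∈ S₁ ∨ (z : F) = x ∨ (z : F) = y} =
          Subtype.val ⁻¹' ((S₁ ∩ S₂) ∪ {x, y}) := by
        ext z
        simp [z.2]
        tauto
      rw [this]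
      exact Set.Finite.preimage Subtype.val_injective.injOn
        (hFin.union ((Set.finite_singleton y).insert x))
    obtain ⟨f₁, hf₁D, hf₁⟩ := h₁.exists_eq_on' hfin₁ (fun z => v z)
    obtain ⟨f₂, hf₂D, hf₂⟩ := h₂.exists_eq_on' hfin₂ (fun z => v z)
    set f : F → ℝ := fun z => if hz : z ∈ S₁ then f₁ ⟨z, hz⟩ else f₂ ⟨z, hmem₂ z hz⟩ with hfdef
    have hvx : v x = 1 := by simp [hv]
    have hvy : v y = 0 := by simp [hv, Ne.symm hxy]
    have hfx : f x = v x := by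
      simp only [hfdef]
      by_cases hz : x ∈ S₁
      · rw [dif_pos hz]; exact hf₁ ⟨x, hz⟩ (Or.inr (Or.inl rfl))
      · rw [dif_neg hz]; exact hf₂ ⟨x, hmem₂ x hz⟩ (Or.inr (Or.inl rfl))
    have hfy : f y = v y := by
      simp only [hfdef]
      by_cases hz : y ∈ S₁
      · rw [dif_pos hz]; exact hf₁ ⟨y, hz⟩ (Or.inr (Or.inr rfl))
      · rw [dif_neg hz]; exact hf₂ ⟨y, hmem₂ y hz⟩ (Or.inr (Or.inr rfl))
    have hfr₁ : S₁.restrict f = f₁ := by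
      funext z
      simp only [Set.restrict_apply, hfdef]
      show dite ((z : F) ∈ S₁) _ _ = _
      rw [dif_pos z.2]
    have hfr₂ : S₂.restrict f = f₂ := by
      funext z
      simp only [Set.restrict_apply, hfdef]
      show dite ((z : F) ∈ S₁) _ _ = _
      by_cases hz : (z : F) ∈ S₁
      · rw [dif_pos hz]
        have e1 : f₁ ⟨z, hz⟩ = v z := hf₁ ⟨z, hz⟩ (Or.inl z.2)
        have e2 : f₂ z = v z := hf₂ z (Or.inl hz)
        rw [e1, e2]
      · rw [dif_neg hz]
    refine ⟨f, ⟨by rw [hfr₁]; exact hf₁D, by rw [hfr₂]; exact hf₂D⟩, ?_⟩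
    rw [hfx, hfy, hvx, hvy]
    norm_num
  -- bddAbove
  · intro x y
    have piece₁ : ∀ z w : ↥S₁, ∃ M, 0 ≤ M ∧
        ∀ f : F → ℝ, S₁.restrict f ∈ Dom₁ ∧ S₂.restrict f ∈ Dom₂ →
          (f ↑z - f ↑w) ^ 2 ≤ M * En f f := by
      intro z w
      obtain ⟨M, hM0, hM⟩ := h₁.pt_bound z w
      refine ⟨M, hM0, fun f hf => ?_⟩
      have b := hM _ hf.1
      have e2 := h₂.nonneg hf.2
      rw [hEn]
      have r1 : S₁.restrict f z = f ↑z := rfl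
      have r2 : S₁.restrict f w = f ↑w := rfl
      rw [r1, r2] at b
      nlinarith
    have piece₂ : ∀ z w : ↥S₂, ∃ M, 0 ≤ M ∧
        ∀ f : F → ℝ, S₁.restrict f ∈ Dom₁ ∧ S₂.restrict f ∈ Dom₂ →
          (f ↑z - f ↑w) ^ 2 ≤ M * En f f := by
      intro z w
      obtain ⟨M, hM0, hM⟩ := h₂.pt_bound z w
      refine ⟨M, hM0, fun f hf => ?_⟩
      have b := hM _ hf.2
      have e1 := h₁.nonneg hf.1
      rw [hEn]
      have r1 : S₂.restrict f z = f ↑z := rfl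
      have r2 : S₂.restrict f w = f ↑w := rfl
      rw [r1, r2] at b
      nlinarith
    have claim : ∃ M : ℝ, ∀ f : F → ℝ, S₁.restrict f ∈ Dom₁ ∧ S₂.restrict f ∈ Dom₂ →
        (f x - f y) ^ 2 ≤ M * En f f := by
      by_cases hx : x ∈ S₁ <;> by_cases hy : y ∈ S₁
      · obtain ⟨M, _, hM⟩ := piece₁ ⟨x, hx⟩ ⟨y, hy⟩
        exact ⟨M, hM⟩
      · obtain ⟨Ma, hMa0, hMa⟩ := piece₁ ⟨x, hx⟩ ⟨x₀, hx₀₁⟩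
        obtain ⟨Mb, hMb0, hMb⟩ := piece₂ ⟨x₀, hx₀₂⟩ ⟨y, hmem₂ y hy⟩
        refine ⟨2 * Ma + 2 * Mb, fun f hf => ?_⟩
        have b1 := hMa f hf
        have b2 := hMb f hf
        nlinarith [sq_nonneg ((f x - f x₀) - (f x₀ - f y))]
      · obtain ⟨Ma, hMa0, hMa⟩ := piece₂ ⟨x, hmem₂ x hx⟩ ⟨x₀, hx₀₂⟩
        obtain ⟨Mb, hMb0, hMb⟩ := piece₁ ⟨x₀, hx₀₁⟩ ⟨y, hy⟩
        refine ⟨2 * Ma + 2 * Mb, fun f hf => ?_⟩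
        have b1 := hMa f hf
        have b2 := hMb f hf
        nlinarith [sq_nonneg ((f x - f x₀) - (f x₀ - f y))]
      · obtain ⟨M, _, hM⟩ := piece₂ ⟨x, hmem₂ x hx⟩ ⟨y, hmem₂ y hy⟩
        exact ⟨M, hM⟩
    obtain ⟨M, hM⟩ := claim
    refine ⟨M, fun r hr => ?_⟩
    obtain ⟨f, hf, hpos, rfl⟩ := hr
    rw [div_le_iff₀ hpos]
    exact hM f hf
  -- markov
  · intro f hf
    obtain ⟨m1, e1⟩ := h₁.markov hf.1
    obtain ⟨m2, e2⟩ := h₂.markov hf.2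
    exact ⟨⟨m1, m2⟩, by rw [hEn, hEn]; exact add_le_add e1 e2⟩
end

section
/- Let F₁, F₂ be two nonempty sets such that F₁ ∩ F₂ is a nonempty finite set. For i = 1, 2, let (E_i, 𝓕_i) be a resistance form on F_i, and let (E, 𝓕) be the resistance form on F₁ ∪ F₂ given by 𝓕 = {f : f|_{F₁} ∈ 𝓕₁, f|_{F₂} ∈ 𝓕₂} and E(f,f) = E₁(f|_{F₁}, f|_{F₁}) + E₂(f|_{F₂}, f|_{F₂}). Let A ⊆ F₁ ∪ F₂ be a finite set containing F₁ ∩ F₂ and set A_i = A ∩ F_i for i = 1, 2. Then for every function g : A → ℝ, the traces satisfy E|_A(g,g) = E₁|_{A₁}(g|_{A₁}, g|_{A₁}) + E₂|_{A₂}(g|_{A₂}, g|_{A₂}). -/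
open scoped Classical

/-- The trace of a form `(En, Dom)` on a subset `A`: for `g : A → ℝ`,
`En|_A(g,g) = inf {En f f : f ∈ Dom, f|_A = g}`. -/
noncomputable def traceEnergy {F : Type*} (En : (F → ℝ) → (F → ℝ) → ℝ)
    (Dom : Set (F → ℝ)) (A : Set F) (g : ↥A → ℝ) : ℝ :=
  sInf {e : ℝ | ∃ f ∈ Dom, A.restrict f = g ∧ En f f = e}

section Aux
variable {G : Type*} {En : (G → ℝ) → (G → ℝ) → ℝ} {Dom : Set (G → ℝ)}

lemma aux_affine_mem (h : IsResistanceForm G En Dom) (c d : ℝ) {f : G → ℝ}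
    (hf : f ∈ Dom) : (fun z => c * f z + d) ∈ Dom := by
  have hmem := h.add_mem (h.smul_mem c hf) (h.const_mem d)
  have heq : (c • f + fun _ => d) = fun z => c * f z + d := by
    funext z
    simp [Pi.add_apply, Pi.smul_apply, smul_eq_mul]
  rwa [heq] at hmem

lemma aux_indicator (h : IsResistanceForm G En Dom) (A : Set G) (hA : A.Finite)
    (x : G) :
    ∃ f ∈ Dom, f x = 1 ∧ ∀ y ∈ A, y ≠ x → f y = 0 := by
  suffices H : ∀ n : ℕ, ∀ f ∈ Dom, f x = 1 → (∀ y, 0 ≤ f y ∧ f y ≤ 1) →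
      (hA.toFinset.filter (fun y => y ≠ x ∧ f y ≠ 0)).card ≤ n →
      ∃ f' ∈ Dom, f' x = 1 ∧ ∀ y ∈ A, y ≠ x → f' y = 0 by
    exact H hA.toFinset.card (fun _ => 1) (h.const_mem 1) rfl
      (fun y => ⟨zero_le_one, le_rfl⟩) (Finset.card_filter_le _ _)
  intro n
  induction n with
  | zero =>
    intro f hf hfx _ hcard
    refine ⟨f, hf, hfx, fun y hy hyx => ?_⟩
    by_contra hne
    have hmem : y ∈ hA.toFinset.filter (fun y => y ≠ x ∧ f y ≠ 0) := by
      simp [hA.mem_toFinset, hy, hyx, hne]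
    have := Finset.card_pos.mpr ⟨y, hmem⟩
    omega
  | succ n ih =>
    intro f hf hfx hbd hcard
    rcases Finset.eq_empty_or_nonempty
        (hA.toFinset.filter (fun y => y ≠ x ∧ f y ≠ 0)) with hemp | ⟨y, hy⟩
    · refine ⟨f, hf, hfx, fun y hy hyx => ?_⟩
      by_contra hne
      have hmem : y ∈ hA.toFinset.filter (fun y => y ≠ x ∧ f y ≠ 0) := by
        simp [hA.mem_toFinset, hy, hyx, hne]
      rw [hemp] at hmem
      exact absurd hmem (Finset.notMem_empty y)
    · rw [Finset.mem_filter] at hy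
      have hyA := hy.1
      have hyx := hy.2.1
      have hyf := hy.2.2
      have hxy : x ≠ y := fun e => hyx e.symm
      obtain ⟨g₀, hg₀, hsep⟩ := h.separates hxy
      have hcne : g₀ x - g₀ y ≠ 0 := sub_ne_zero.mpr hsep
      set c : ℝ := (g₀ x - g₀ y)⁻¹ with hc
      have hg₁mem : (fun z => c * g₀ z + (-(c * g₀ y))) ∈ Dom := aux_affine_mem h _ _ hg₀
      set g₁ : G → ℝ := fun z => c * g₀ z + (-(c * g₀ y)) with hg₁def
      have hg₁x : g₁ x = 1 := by
        show c * g₀ x + (-(c * g₀ y)) = 1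
        rw [hc]
        field_simp
        ring
      have hg₁y : g₁ y = 0 := by
        show c * g₀ y + (-(c * g₀ y)) = 0
        ring
      obtain ⟨hg₂mem, -⟩ := h.markov hg₁mem
      set g₂ : G → ℝ := fun t => min (max (g₁ t) 0) 1 with hg₂def
      have hg₂x : g₂ x = 1 := by simp [hg₂def, hg₁x]
      have hg₂y : g₂ y = 0 := by simp [hg₂def, hg₁y]
      have hg₂bd : ∀ z, 0 ≤ g₂ z ∧ g₂ z ≤ 1 := fun z =>
        ⟨le_min (le_max_right _ _) zero_le_one, min_le_right _ _⟩
      set p : G → ℝ := f + g₂ + (fun _ => (-1 : ℝ)) with hpdef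
      have hpmem : p ∈ Dom := h.add_mem (h.add_mem hf hg₂mem) (h.const_mem (-1))
      have hpz : ∀ z, p z = f z + g₂ z + (-1) := fun z => rfl
      obtain ⟨hf'mem, -⟩ := h.markov hpmem
      set f' : G → ℝ := fun t => min (max (p t) 0) 1 with hf'def
      have hf'x : f' x = 1 := by
        show min (max (p x) 0) 1 = 1
        rw [hpz, hfx, hg₂x]; norm_num
      have hbd' : ∀ z, 0 ≤ f' z ∧ f' z ≤ 1 := fun z =>
        ⟨le_min (le_max_right _ _) zero_le_one, min_le_right _ _⟩
      have hle : ∀ z, f' z ≤ f z := by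
        intro z
        have h1 : p z ≤ f z := by rw [hpz]; have := (hg₂bd z).2; linarith
        exact (min_le_left _ _).trans (max_le h1 (hbd z).1)
      have hf'y : f' y = 0 := by
        have hpy : p y ≤ 0 := by rw [hpz, hg₂y]; have := (hbd y).2; linarith
        show min (max (p y) 0) 1 = 0
        rw [max_eq_right hpy]
        simp
      have hsubset : hA.toFinset.filter (fun z => z ≠ x ∧ f' z ≠ 0) ⊆
          (hA.toFinset.filter (fun z => z ≠ x ∧ f z ≠ 0)).erase y := by
        intro z hz
        rw [Finset.mem_filter] at hz
        refine Finset.mem_erase.mpr ⟨?_, Finset.mem_filter.mpr ⟨hz.1, hz.2.1, ?_⟩⟩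
        · rintro rfl; exact hz.2.2 hf'y
        · intro h0
          exact hz.2.2 (le_antisymm (h0 ▸ hle z) (hbd' z).1)
      have hcard' : (hA.toFinset.filter (fun z => z ≠ x ∧ f' z ≠ 0)).card ≤ n := by
        have h1 := Finset.card_le_card hsubset
        have h2 : ((hA.toFinset.filter (fun z => z ≠ x ∧ f z ≠ 0)).erase y).card <
            (hA.toFinset.filter (fun z => z ≠ x ∧ f z ≠ 0)).card :=
          Finset.card_erase_lt_of_mem (Finset.mem_filter.mpr ⟨hyA, hyx, hyf⟩)
        omega
      exact ih f' hf'mem hf'x hbd' hcard'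

lemma aux_extend (h : IsResistanceForm G En Dom) (A : Set G) (hA : A.Finite)
    (g : ↥A → ℝ) : ∃ f ∈ Dom, A.restrict f = g := by
  haveI : Fintype ↥A := hA.fintype
  choose e he₁ he₂ he₃ using fun x : ↥A => aux_indicator h A hA (x : G)
  refine ⟨∑ x : ↥A, g x • e x, ?_, ?_⟩
  · refine Finset.sum_induction _ (· ∈ Dom) (fun a b ha hb => h.add_mem ha hb) ?_ ?_
    · have h0 : (fun _ : G => (0:ℝ)) ∈ Dom := h.const_mem 0
      exact h0
    · intro i _; exact h.smul_mem _ (he₁ i)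
  · funext y
    show (∑ x : ↥A, g x • e x) (y : G) = g y
    rw [Finset.sum_apply]
    rw [Finset.sum_eq_single y]
    · rw [Pi.smul_apply, he₂ y, smul_eq_mul, mul_one]
    · intro b _ hb
      have hne : (y : G) ≠ (b : G) := fun hh => hb (Subtype.ext hh).symm
      rw [Pi.smul_apply, he₃ b (y : G) y.2 hne, smul_eq_mul, mul_zero]
    · intro hy; exact absurd (Finset.mem_univ y) hy

lemma aux_sInf_add {s t : Set ℝ} (hs : s.Nonempty) (ht : t.Nonempty)
    (hbs : BddBelow s) (hbt : BddBelow t) :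
    sInf {r : ℝ | ∃ a ∈ s, ∃ b ∈ t, r = a + b} = sInf s + sInf t := by
  set U : Set ℝ := {r : ℝ | ∃ a ∈ s, ∃ b ∈ t, r = a + b} with hUdef
  obtain ⟨cs, hcs⟩ := hbs
  obtain ⟨ct, hct⟩ := hbt
  obtain ⟨a₀, ha₀⟩ := id hs
  obtain ⟨b₀, hb₀⟩ := id ht
  have hU : U.Nonempty := ⟨a₀ + b₀, a₀, ha₀, b₀, hb₀, rfl⟩
  have hbU : BddBelow U := ⟨cs + ct, by
    rintro r ⟨a, ha, b, hb, rfl⟩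
    exact add_le_add (hcs ha) (hct hb)⟩
  apply le_antisymm
  · have key : ∀ b ∈ t, ∀ a ∈ s, sInf U - b ≤ a := by
      intro b hb a ha
      have : sInf U ≤ a + b := csInf_le hbU ⟨a, ha, b, hb, rfl⟩
      linarith
    have key2 : ∀ b ∈ t, sInf U - sInf s ≤ b := by
      intro b hb
      have := le_csInf hs (key b hb)
      linarith
    have := le_csInf ht key2
    linarith
  · apply le_csInf hU
    rintro r ⟨a, ha, b, hb, rfl⟩
    exact add_le_add (csInf_le ⟨cs, hcs⟩ ha) (csInf_le ⟨ct, hct⟩ hb)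

end Aux


/-- Let `F₁, F₂` have a nonempty finite intersection, with resistance forms `(En_i, Dom_i)` on
each, and let `(En, Dom)` be the glued resistance form on `F₁ ∪ F₂`.  For every finite set `A`
containing `F₁ ∩ F₂`, and every `g : A → ℝ`, the trace energies satisfy
`En|_A(g,g) = En₁|_{A ∩ F₁}(g,g) + En₂|_{A ∩ F₂}(g,g)`. -/
theorem trace_energy_glue {F : Type*} (S₁ S₂ : Set F)
    (hUnion : S₁ ∪ S₂ = Set.univ)
    (hFin : (S₁ ∩ S₂).Finite) (hNe : (S₁ ∩ S₂).Nonempty)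
    (En₁ : (↥S₁ → ℝ) → (↥S₁ → ℝ) → ℝ) (Dom₁ : Set (↥S₁ → ℝ))
    (En₂ : (↥S₂ → ℝ) → (↥S₂ → ℝ) → ℝ) (Dom₂ : Set (↥S₂ → ℝ))
    (h₁ : IsResistanceForm ↥S₁ En₁ Dom₁)
    (h₂ : IsResistanceForm ↥S₂ En₂ Dom₂)
    (En : (F → ℝ) → (F → ℝ) → ℝ) (Dom : Set (F → ℝ))
    (hDom : Dom = {f : F → ℝ | S₁.restrict f ∈ Dom₁ ∧ S₂.restrict f ∈ Dom₂})
    (hEn : ∀ f g : F → ℝ,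
      En f g = En₁ (S₁.restrict f) (S₁.restrict g) + En₂ (S₂.restrict f) (S₂.restrict g))
    (A : Set F) (hAfin : A.Finite) (hsub : S₁ ∩ S₂ ⊆ A) :
    ∀ g : ↥A → ℝ,
      traceEnergy En Dom A g =
        traceEnergy En₁ Dom₁ {s : ↥S₁ | (s : F) ∈ A}
          (fun p => g ⟨(p.1 : F), p.2⟩) +
        traceEnergy En₂ Dom₂ {s : ↥S₂ | (s : F) ∈ A}
          (fun p => g ⟨(p.1 : F), p.2⟩) := by
  intro g
  set A₁ : Set ↥S₁ := {s : ↥S₁ | (s : F) ∈ A} with hA₁def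
  set A₂ : Set ↥S₂ := {s : ↥S₂ | (s : F) ∈ A} with hA₂def
  set g₁ : ↥A₁ → ℝ := fun p => g ⟨(p.1 : F), p.2⟩ with hg₁def
  set g₂ : ↥A₂ → ℝ := fun p => g ⟨(p.1 : F), p.2⟩ with hg₂def
  have hA₁fin : A₁.Finite := hAfin.preimage Subtype.val_injective.injOn
  have hA₂fin : A₂.Finite := hAfin.preimage Subtype.val_injective.injOn
  set T : Set ℝ := {e : ℝ | ∃ f ∈ Dom, A.restrict f = g ∧ En f f = e} with hTdef
  set T₁ : Set ℝ := {e : ℝ | ∃ f ∈ Dom₁, A₁.restrict f = g₁ ∧ En₁ f f = e} with hT₁def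
  set T₂ : Set ℝ := {e : ℝ | ∃ f ∈ Dom₂, A₂.restrict f = g₂ ∧ En₂ f f = e} with hT₂def
  have hT₁ne : T₁.Nonempty := by
    obtain ⟨f, hf, hre⟩ := aux_extend h₁ A₁ hA₁fin g₁
    exact ⟨En₁ f f, f, hf, hre, rfl⟩
  have hT₂ne : T₂.Nonempty := by
    obtain ⟨f, hf, hre⟩ := aux_extend h₂ A₂ hA₂fin g₂
    exact ⟨En₂ f f, f, hf, hre, rfl⟩
  have hbdd₁ : BddBelow T₁ := ⟨0, by rintro e ⟨f, hf, -, rfl⟩; exact h₁.nonneg hf⟩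
  have hbdd₂ : BddBelow T₂ := ⟨0, by rintro e ⟨f, hf, -, rfl⟩; exact h₂.nonneg hf⟩
  have hmem2 : ∀ z : F, z ∉ S₁ → z ∈ S₂ := by
    intro z hz
    have : z ∈ S₁ ∪ S₂ := hUnion ▸ Set.mem_univ z
    exact this.resolve_left hz
  have hTeq : T = {r : ℝ | ∃ a ∈ T₁, ∃ b ∈ T₂, r = a + b} := by
    ext r
    constructor
    · rintro ⟨f, hf, hres, rfl⟩
      rw [hDom] at hf
      refine ⟨En₁ (S₁.restrict f) (S₁.restrict f), ⟨S₁.restrict f, hf.1, ?_, rfl⟩,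
        En₂ (S₂.restrict f) (S₂.restrict f), ⟨S₂.restrict f, hf.2, ?_, rfl⟩, hEn f f⟩
      · funext p
        show f ((p : ↥S₁) : F) = g ⟨((p : ↥S₁) : F), p.2⟩
        exact congrFun hres ⟨((p : ↥S₁) : F), p.2⟩
      · funext p
        show f ((p : ↥S₂) : F) = g ⟨((p : ↥S₂) : F), p.2⟩
        exact congrFun hres ⟨((p : ↥S₂) : F), p.2⟩
    · rintro ⟨a, ⟨f₁, hf₁, hres₁, rfl⟩, b, ⟨f₂, hf₂, hres₂, rfl⟩, rfl⟩
      set f : F → ℝ := fun z => if hz : z ∈ S₁ then f₁ ⟨z, hz⟩ else f₂ ⟨z, hmem2 z hz⟩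
        with hfdef
      have agree : ∀ (z : F) (hz1 : z ∈ S₁) (hz2 : z ∈ S₂), f₁ ⟨z, hz1⟩ = f₂ ⟨z, hz2⟩ := by
        intro z hz1 hz2
        have hzA : z ∈ A := hsub ⟨hz1, hz2⟩
        have e1 : f₁ ⟨z, hz1⟩ = g ⟨z, hzA⟩ := congrFun hres₁ ⟨⟨z, hz1⟩, hzA⟩
        have e2 : f₂ ⟨z, hz2⟩ = g ⟨z, hzA⟩ := congrFun hres₂ ⟨⟨z, hz2⟩, hzA⟩
        rw [e1, e2]
      have hres₁' : S₁.restrict f = f₁ := by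
        funext p
        show (if hz : (p : F) ∈ S₁ then f₁ ⟨(p : F), hz⟩ else f₂ ⟨(p : F), hmem2 _ hz⟩) = f₁ p
        rw [dif_pos p.2]
      have hres₂' : S₂.restrict f = f₂ := by
        funext p
        show (if hz : (p : F) ∈ S₁ then f₁ ⟨(p : F), hz⟩ else f₂ ⟨(p : F), hmem2 _ hz⟩) = f₂ p
        by_cases hz : (p : F) ∈ S₁
        · rw [dif_pos hz]
          exact agree (p : F) hz p.2
        · rw [dif_neg hz]
      refine ⟨f, ?_, ?_, ?_⟩
      · rw [hDom]
        exact ⟨hres₁' ▸ hf₁, hres₂' ▸ hf₂⟩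
      · funext q
        show f (q : F) = g q
        by_cases hz : (q : F) ∈ S₁
        · have hfq : f (q : F) = f₁ ⟨(q : F), hz⟩ := dif_pos hz
          rw [hfq]
          exact congrFun hres₁ ⟨⟨(q : F), hz⟩, q.2⟩
        · have hfq : f (q : F) = f₂ ⟨(q : F), hmem2 _ hz⟩ := dif_neg hz
          rw [hfq]
          exact congrFun hres₂ ⟨⟨(q : F), hmem2 _ hz⟩, q.2⟩
      · rw [hEn, hres₁', hres₂']
  show sInf T = sInf T₁ + sInf T₂
  rw [hTeq]
  exact aux_sInf_add hT₁ne hT₂ne hbdd₁ hbdd₂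
end
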